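/- arXiv:2102.11835 — 3 statements merged into one kernel-verified Lean document; each statement's English description precedes it below -/
import Mathlib

section
/- For a bipartite pure state |ψ⟩ on P⊗Q with Schmidt coefficients α₁,...,α_D (so reduced state ψ^P has eigenvalues α_i²), the conditional min-entropy satisfies H_min(P|Q)_ψ = -2 log(α₁ + ... + α_D), i.e., 2^{-H_min(P|Q)_ψ} = (Tr √(ψ^P))². -/
open Matrix
open scoped ComplexOrder Kronecker ComplexConjugate

/-- The conditional min-entropy `H_min(P|Q)_ρ = sup_σ sup {λ : 2^{-λ} I_P ⊗ σ ≥ ρ}`,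
where `σ` ranges over density matrices on `Q`. -/
noncomputable def Hmin {P Q : Type*} [Fintype P] [Fintype Q] [DecidableEq P] [DecidableEq Q]
    (ρ : Matrix (P × Q) (P × Q) ℂ) : ℝ :=
  sSup {l : ℝ | ∃ σ : Matrix Q Q ℂ, σ.PosSemidef ∧ σ.trace = 1 ∧
    ((((2 : ℝ) ^ (-l) : ℝ) : ℂ) • ((1 : Matrix P P ℂ) ⊗ₖ σ) - ρ).PosSemidef}

/-- The rank-one matrix `|ψ⟩⟨ψ|`. -/
def outer {ι : Type*} (ψ : ι → ℂ) : Matrix ι ι ℂ :=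
  Matrix.of fun a b => ψ a * conj (ψ b)

/- ### Auxiliary lemmas -/

lemma outer_qf {ι : Type*} [Fintype ι] (v w : ι → ℂ) :
    star v ⬝ᵥ (outer w) *ᵥ v
      = (∑ x, conj (v x) * w x) * conj (∑ x, conj (v x) * w x) := by
  rw [_root_.map_sum, Finset.sum_mul_sum]
  simp only [dotProduct, mulVec, outer, of_apply, Pi.star_apply, RCLike.star_def, _root_.map_mul,
    Complex.conj_conj, Finset.mul_sum]
  refine Finset.sum_congr rfl fun x _ => Finset.sum_congr rfl fun y _ => by ring

lemma outer_herm {ι : Type*} (w : ι → ℂ) : (outer w).IsHermitian := by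
  ext a b
  simp [outer, conjTranspose_apply, mul_comm]

lemma kron_qf {P Q : Type*} [Fintype P] [Fintype Q] [DecidableEq P]
    (σ : Matrix Q Q ℂ) (v : P × Q → ℂ) :
    star v ⬝ᵥ ((1 : Matrix P P ℂ) ⊗ₖ σ) *ᵥ v
      = ∑ a, star (fun b => v (a, b)) ⬝ᵥ σ *ᵥ (fun b => v (a, b)) := by
  simp only [dotProduct, mulVec, Fintype.sum_prod_type, kroneckerMap_apply, one_apply,
    ite_mul, one_mul, zero_mul, Pi.star_apply]
  refine Finset.sum_congr rfl fun a _ => Finset.sum_congr rfl fun b _ => ?_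
  congr 1
  rw [Finset.sum_comm]
  simp [Finset.sum_ite_eq]

lemma sum_prod_factor {P Q : Type*} [Fintype P] [Fintype Q] (g : P → ℂ) (h : Q → ℂ) :
    ∑ x : P × Q, g x.1 * h x.2 = (∑ a, g a) * (∑ b, h b) := by
  rw [Finset.sum_mul_sum, ← Fintype.sum_prod_type']

lemma overlap {P Q : Type*} [Fintype P] [Fintype Q] {D : ℕ}
    {e : Fin D → P → ℂ} {f : Fin D → Q → ℂ}
    (he : ∀ i j, ∑ a, conj (e i a) * e j a = if i = j then 1 else 0)
    (hf : ∀ i j, ∑ b, conj (f i b) * f j b = if i = j then 1 else 0)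
    (c d : Fin D → ℂ) :
    ∑ x : P × Q, (∑ i, c i * conj (e i x.1 * f i x.2)) * (∑ j, d j * (e j x.1 * f j x.2))
      = ∑ i, c i * d i := by
  have h1 : ∀ x : P × Q,
      (∑ i, c i * conj (e i x.1 * f i x.2)) * (∑ j, d j * (e j x.1 * f j x.2))
      = ∑ p : Fin D × Fin D, (c p.1 * d p.2) *
          ((conj (e p.1 x.1) * e p.2 x.1) * (conj (f p.1 x.2) * f p.2 x.2)) := by
    intro x
    rw [Finset.sum_mul_sum, ← Fintype.sum_prod_type']
    exact Finset.sum_congr rfl fun p _ => by simp only [_root_.map_mul]; ring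
  simp only [h1]
  rw [Finset.sum_comm]
  have h2 : ∀ p : Fin D × Fin D,
      ∑ x : P × Q, (c p.1 * d p.2) *
          ((conj (e p.1 x.1) * e p.2 x.1) * (conj (f p.1 x.2) * f p.2 x.2))
      = (c p.1 * d p.2) * (if p.1 = p.2 then 1 else 0) := by
    intro p
    rw [← Finset.mul_sum,
      sum_prod_factor (fun a => conj (e p.1 a) * e p.2 a) (fun b => conj (f p.1 b) * f p.2 b),
      he, hf]
    by_cases h : p.1 = p.2 <;> simp [h]
  simp only [h2]
  rw [Fintype.sum_prod_type]
  simp [mul_ite, Finset.sum_ite_eq]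

lemma qf_expand {Q : Type*} [Fintype Q] (σ : Matrix Q Q ℂ) (u v : Q → ℂ) :
    star u ⬝ᵥ σ *ᵥ v = ∑ y : Q × Q, conj (u y.1) * σ y.1 y.2 * v y.2 := by
  rw [Fintype.sum_prod_type]
  simp [dotProduct, mulVec, Finset.mul_sum, mul_assoc]

lemma qf_coeff {Q : Type*} [Fintype Q] {D : ℕ} (σ : Matrix Q Q ℂ) (f : Fin D → Q → ℂ)
    (c : Fin D → ℂ) :
    star (fun b => ∑ i, c i * f i b) ⬝ᵥ σ *ᵥ (fun b => ∑ i, c i * f i b)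
      = ∑ i, ∑ j, conj (c i) * c j * (star (f i) ⬝ᵥ σ *ᵥ f j) := by
  rw [qf_expand]
  have h1 : ∀ y : Q × Q,
      conj (∑ i, c i * f i y.1) * σ y.1 y.2 * (∑ j, c j * f j y.2)
      = ∑ p : Fin D × Fin D, (conj (c p.1) * c p.2) *
          (conj (f p.1 y.1) * σ y.1 y.2 * f p.2 y.2) := by
    intro y
    rw [_root_.map_sum, Finset.sum_mul, Finset.sum_mul_sum, ← Fintype.sum_prod_type']
    exact Finset.sum_congr rfl fun p _ => by simp only [_root_.map_mul]; ring
  simp only [h1]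
  rw [Finset.sum_comm]
  have h2 : ∀ i j : Fin D, conj (c i) * c j * (star (f i) ⬝ᵥ σ *ᵥ f j)
      = ∑ y : Q × Q, (conj (c i) * c j) * (conj (f i y.1) * σ y.1 y.2 * f j y.2) :=
    fun i j => by rw [qf_expand, Finset.mul_sum]
  simp only [h2]
  simp [Fintype.sum_prod_type]

lemma bessel_bound {Q : Type*} [Fintype Q] {D : ℕ} {σ : Matrix Q Q ℂ}
    (hσ : σ.PosSemidef) (hσtr : σ.trace = 1)
    {f : Fin D → Q → ℂ}
    (hf : ∀ i j, ∑ b, conj (f i b) * f j b = if i = j then 1 else 0) :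
    (∑ i, star (f i) ⬝ᵥ σ *ᵥ f i).re ≤ 1 := by
  classical
  open scoped MatrixOrder Matrix.Norms.L2Operator in
  obtain ⟨B, hB⟩ := CStarAlgebra.nonneg_iff_eq_star_mul_self.mp hσ.nonneg
  rw [star_eq_conjTranspose] at hB
  subst hB
  have hq : ∀ i, star (f i) ⬝ᵥ (Bᴴ * B) *ᵥ f i
      = ((∑ k, Complex.normSq ((B *ᵥ f i) k) : ℝ) : ℂ) := by
    intro i
    rw [← Matrix.mulVec_mulVec, Matrix.dotProduct_mulVec, ← Matrix.star_mulVec]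
    push_cast
    simp [dotProduct, mul_comm, Complex.mul_conj]
  have htr : (∑ k, ∑ b, Complex.normSq (B k b)) = 1 := by
    have h2 : (Bᴴ * B).trace = ((∑ k, ∑ b, Complex.normSq (B k b) : ℝ) : ℂ) := by
      push_cast
      rw [Matrix.trace, Finset.sum_comm]
      simp [Matrix.diag, Matrix.mul_apply, Matrix.conjTranspose_apply, mul_comm,
        Complex.mul_conj]
    rw [h2] at hσtr
    exact_mod_cast hσtr
  set F : Fin D → EuclideanSpace ℂ Q := fun i => (WithLp.equiv 2 (Q → ℂ)).symm (f i) with hF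
  have hON : Orthonormal ℂ F := by
    rw [orthonormal_iff_ite]
    intro i j
    simpa [hF, PiLp.inner_apply, RCLike.inner_apply, mul_comm] using hf i j
  have bes : ∀ k, ∑ i, Complex.normSq ((B *ᵥ f i) k) ≤ ∑ b, Complex.normSq (B k b) := by
    intro k
    set x : EuclideanSpace ℂ Q := (WithLp.equiv 2 (Q → ℂ)).symm (fun b => conj (B k b)) with hx
    have h := hON.sum_inner_products_le (s := Finset.univ) (x := x)
    have hinner : ∀ i, (inner (𝕜 := ℂ) (F i) x) = conj ((B *ᵥ f i) k) := by
      intro i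
      simp [hF, hx, PiLp.inner_apply, RCLike.inner_apply, Matrix.mulVec, dotProduct,
        map_sum, mul_comm]
    have hnx : ‖x‖ ^ 2 = ∑ b, Complex.normSq (B k b) := by
      rw [EuclideanSpace.norm_eq, Real.sq_sqrt (by positivity)]
      simp [hx, Complex.normSq_eq_norm_sq]
    calc ∑ i, Complex.normSq ((B *ᵥ f i) k)
        = ∑ i, ‖(inner (𝕜 := ℂ) (F i) x)‖ ^ 2 := by
          simp [hinner, Complex.normSq_eq_norm_sq]
      _ ≤ ‖x‖ ^ 2 := h
      _ = _ := hnx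
  calc (∑ i, star (f i) ⬝ᵥ (Bᴴ * B) *ᵥ f i).re
      = ∑ i, ∑ k, Complex.normSq ((B *ᵥ f i) k) := by
        simp [hq]
    _ = ∑ k, ∑ i, Complex.normSq ((B *ᵥ f i) k) := Finset.sum_comm
    _ ≤ ∑ k, ∑ b, Complex.normSq (B k b) := Finset.sum_le_sum fun k _ => bes k
    _ = 1 := htr

lemma one_kron_herm {P Q : Type*} [Fintype P] [Fintype Q] [DecidableEq P] {σ : Matrix Q Q ℂ}
    (h : σ.IsHermitian) : ((1 : Matrix P P ℂ) ⊗ₖ σ).IsHermitian := by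
  ext ⟨a, b⟩ ⟨a', b'⟩
  simp only [conjTranspose_apply, kroneckerMap_apply, one_apply, RCLike.star_def,
    _root_.map_mul, apply_ite (starRingEnd ℂ), _root_.map_one, map_zero]
  by_cases hh : a = a'
  · subst hh
    simpa using congrFun (congrFun h b) b'
  · simp [hh, Ne.symm hh]

/-- For a bipartite pure state `|ψ⟩ = ∑ᵢ αᵢ|eᵢ⟩|fᵢ⟩` with Schmidt coefficients `αᵢ ≥ 0`
(so `∑ᵢ αᵢ² = 1`), the conditional min-entropy is `H_min(P|Q)_ψ = -2 log₂(α₁ + ⋯ + α_D)`. -/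
theorem Hmin_pure_state {P Q : Type*} [Fintype P] [Fintype Q] [DecidableEq P] [DecidableEq Q]
    {D : ℕ} (α : Fin D → ℝ) (e : Fin D → P → ℂ) (f : Fin D → Q → ℂ)
    (hα : ∀ i, 0 ≤ α i) (hα1 : ∑ i, (α i) ^ 2 = 1)
    (he : ∀ i j, ∑ a, conj (e i a) * e j a = if i = j then 1 else 0)
    (hf : ∀ i j, ∑ b, conj (f i b) * f j b = if i = j then 1 else 0)
    (ψ : P × Q → ℂ) (hψ : ∀ x, ψ x = ∑ i, (α i : ℂ) * e i x.1 * f i x.2) :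
    Hmin (outer ψ) = -2 * Real.logb 2 (∑ i, α i) := by
  classical
  set s : ℝ := ∑ i, α i with hs_def
  have hs_nonneg : 0 ≤ s := Finset.sum_nonneg fun i _ => hα i
  have hs_pos : 0 < s := by
    rcases hs_nonneg.lt_or_eq with h | h
    · exact h
    · exfalso
      have hall := (Finset.sum_eq_zero_iff_of_nonneg (fun i _ => hα i)).mp h.symm
      have : ∑ i, α i ^ 2 = 0 :=
        Finset.sum_eq_zero fun i hi => by rw [hall i hi]; ring
      rw [hα1] at this; norm_num at this
  set l₀ : ℝ := -2 * Real.logb 2 s with hl₀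
  have h2l : (2 : ℝ) ^ (-l₀) = s ^ 2 := by
    rw [hl₀, show -(-2 * Real.logb 2 s) = Real.logb 2 s * 2 by ring,
      Real.rpow_mul (by norm_num : (0:ℝ) ≤ 2),
      Real.rpow_logb (by norm_num) (by norm_num) hs_pos,
      show (2:ℝ) = ((2:ℕ):ℝ) by norm_num, Real.rpow_natCast]
  set S : Set ℝ := {l : ℝ | ∃ σ : Matrix Q Q ℂ, σ.PosSemidef ∧ σ.trace = 1 ∧
    ((((2 : ℝ) ^ (-l) : ℝ) : ℂ) • ((1 : Matrix P P ℂ) ⊗ₖ σ) - outer ψ).PosSemidef} with hS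
  have hub : ∀ l ∈ S, l ≤ l₀ := by
    rintro l ⟨σ, hσpsd, hσtr, hM⟩
    set v₁ : P × Q → ℂ := fun x => ∑ i, e i x.1 * f i x.2 with hv₁
    have hc₁ : ∑ x, conj (v₁ x) * ψ x = (s : ℂ) := by
      calc ∑ x, conj (v₁ x) * ψ x
          = ∑ x : P × Q, (∑ i, (1:ℂ) * conj (e i x.1 * f i x.2))
              * (∑ j, ((α j : ℝ) : ℂ) * (e j x.1 * f j x.2)) := by
            refine Finset.sum_congr rfl fun x _ => ?_
            rw [hψ, hv₁, _root_.map_sum]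
            simp [mul_assoc]
        _ = ∑ i, (1:ℂ) * ((α i : ℝ):ℂ) := overlap he hf _ _
        _ = (s:ℂ) := by rw [hs_def]; push_cast; simp
    have hE1 : star v₁ ⬝ᵥ ((1 : Matrix P P ℂ) ⊗ₖ σ) *ᵥ v₁ = ∑ i, star (f i) ⬝ᵥ σ *ᵥ f i := by
      rw [kron_qf]
      calc ∑ a, star (fun b => v₁ (a, b)) ⬝ᵥ σ *ᵥ (fun b => v₁ (a, b))
          = ∑ a, ∑ i, ∑ j, conj (e i a) * e j a * (star (f i) ⬝ᵥ σ *ᵥ f j) :=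
            Finset.sum_congr rfl fun a _ => qf_coeff σ f (fun i => e i a)
        _ = ∑ i, ∑ j, (∑ a, conj (e i a) * e j a) * (star (f i) ⬝ᵥ σ *ᵥ f j) := by
            rw [Finset.sum_comm]
            refine Finset.sum_congr rfl fun i _ => ?_
            rw [Finset.sum_comm]
            refine Finset.sum_congr rfl fun j _ => ?_
            rw [← Finset.sum_mul]
        _ = ∑ i, star (f i) ⬝ᵥ σ *ᵥ f i := by
            simp [he, ite_mul, Finset.sum_ite_eq]
    have h0 := hM.dotProduct_mulVec_nonneg v₁
    rw [sub_mulVec, dotProduct_sub, smul_mulVec, dotProduct_smul, hE1, outer_qf, hc₁,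
      smul_eq_mul, Complex.conj_ofReal, ← Complex.ofReal_mul] at h0
    have hre := (Complex.le_def.mp h0).1
    simp only [Complex.sub_re, Complex.re_ofReal_mul, Complex.ofReal_re, Complex.zero_re] at hre
    have hq1 : (∑ i, star (f i) ⬝ᵥ σ *ᵥ f i).re ≤ 1 := bessel_bound hσpsd hσtr hf
    have hp : (0:ℝ) < (2:ℝ) ^ (-l) := Real.rpow_pos_of_pos (by norm_num) _
    have hs2 : s ^ 2 ≤ (2:ℝ) ^ (-l) := by nlinarith
    have hlog : Real.logb 2 (s ^ 2) ≤ Real.logb 2 ((2:ℝ) ^ (-l)) :=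
      Real.logb_le_logb_of_le (by norm_num) (by positivity) hs2
    rw [Real.logb_rpow (by norm_num) (by norm_num), Real.logb_pow] at hlog
    rw [hl₀]
    push_cast at hlog
    linarith
  have hmem : l₀ ∈ S := by
    set σ₀ : Matrix Q Q ℂ := Matrix.of fun b b' =>
      ((s⁻¹ : ℝ) : ℂ) * ∑ i, ((α i : ℝ) : ℂ) * (f i b * conj (f i b')) with hσ₀
    have hσ₀herm : σ₀.IsHermitian := by
      ext b b'
      simp only [conjTranspose_apply, hσ₀, of_apply, RCLike.star_def, _root_.map_mul,
        _root_.map_sum, Complex.conj_ofReal, Complex.conj_conj]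
      congr 1
      exact Finset.sum_congr rfl fun i _ => by ring
    have hσ₀qf : ∀ w : Q → ℂ, star w ⬝ᵥ σ₀ *ᵥ w
        = ((s⁻¹ : ℝ) : ℂ) * ∑ i, ((α i : ℝ) : ℂ) *
            ((Complex.normSq (∑ b, conj (w b) * f i b) : ℝ) : ℂ) := by
      intro w
      rw [qf_expand]
      have h1 : ∀ y : Q × Q, conj (w y.1) * σ₀ y.1 y.2 * w y.2
          = ∑ i, ((s⁻¹:ℝ):ℂ) * (((α i:ℝ):ℂ) *
              ((conj (w y.1) * f i y.1) * (w y.2 * conj (f i y.2)))) := by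
        intro y
        simp only [hσ₀, of_apply, Finset.mul_sum, Finset.sum_mul]
        exact Finset.sum_congr rfl fun i _ => by ring
      simp only [h1]
      rw [Finset.sum_comm, Finset.mul_sum]
      refine Finset.sum_congr rfl fun i _ => ?_
      rw [← Finset.mul_sum, ← Finset.mul_sum,
        sum_prod_factor (fun a => conj (w a) * f i a) (fun b => w b * conj (f i b))]
      have hconj : (∑ b, w b * conj (f i b)) = conj (∑ b, conj (w b) * f i b) := by
        rw [_root_.map_sum]
        exact Finset.sum_congr rfl fun b _ => by simp [mul_comm]
      rw [hconj, Complex.mul_conj]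
    have hσ₀psd : σ₀.PosSemidef := by
      refine posSemidef_iff_dotProduct_mulVec.mpr ⟨hσ₀herm, fun w => ?_⟩
      rw [hσ₀qf]
      have hcast : ((s⁻¹:ℝ):ℂ) * ∑ i, ((α i:ℝ):ℂ) *
            ((Complex.normSq (∑ b, conj (w b) * f i b) : ℝ) : ℂ)
          = ((s⁻¹ * ∑ i, α i * Complex.normSq (∑ b, conj (w b) * f i b) : ℝ) : ℂ) := by
        push_cast; ring
      rw [hcast]
      refine Complex.zero_le_real.mpr ?_
      exact mul_nonneg (inv_nonneg.mpr hs_nonneg)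
        (Finset.sum_nonneg fun i _ => mul_nonneg (hα i) (Complex.normSq_nonneg _))
    have hfi : ∀ i, ∑ b, f i b * conj (f i b) = 1 := by
      intro i
      have h := hf i i
      rw [if_pos rfl] at h
      rw [← h]
      exact Finset.sum_congr rfl fun b _ => mul_comm _ _
    have hσ₀tr : σ₀.trace = 1 := by
      rw [Matrix.trace]
      simp only [Matrix.diag, hσ₀, of_apply]
      rw [← Finset.mul_sum, Finset.sum_comm]
      have h1 : ∀ i, ∑ b, ((α i:ℝ):ℂ) * (f i b * conj (f i b)) = ((α i:ℝ):ℂ) := by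
        intro i; rw [← Finset.mul_sum, hfi i, mul_one]
      rw [Finset.sum_congr rfl fun i _ => h1 i,
        show (∑ i, ((α i:ℝ):ℂ)) = ((s:ℝ):ℂ) by rw [hs_def]; push_cast; ring,
        ← Complex.ofReal_mul, inv_mul_cancel₀ hs_pos.ne']
      simp
    refine ⟨σ₀, hσ₀psd, hσ₀tr, ?_⟩
    rw [h2l]
    refine posSemidef_iff_dotProduct_mulVec.mpr ⟨?_, ?_⟩
    · -- Hermitian
      refine Matrix.IsHermitian.sub ?_ (outer_herm ψ)
      have hK : ((1 : Matrix P P ℂ) ⊗ₖ σ₀).IsHermitian := one_kron_herm hσ₀herm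
      show _ = _
      rw [conjTranspose_smul, hK]
      norm_num [RCLike.star_def, Complex.conj_ofReal]
    · intro v
      have main_eq : star v ⬝ᵥ ((((s^2 : ℝ)):ℂ) • ((1 : Matrix P P ℂ) ⊗ₖ σ₀) - outer ψ) *ᵥ v
          = (((s^2 * ∑ a, s⁻¹ * ∑ i, α i * Complex.normSq (∑ b, conj (v (a,b)) * f i b)
              - Complex.normSq (∑ x, conj (v x) * ψ x) : ℝ)) : ℂ) := by
        rw [sub_mulVec, dotProduct_sub, smul_mulVec, dotProduct_smul, kron_qf, outer_qf,
          smul_eq_mul, Complex.mul_conj]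
        simp only [hσ₀qf]
        push_cast
        ring
      rw [main_eq]
      refine Complex.zero_le_real.mpr ?_
      set d : Fin D → P → ℂ := fun i a => ∑ b, conj (v (a, b)) * f i b with hd
      set cψ : ℂ := ∑ x, conj (v x) * ψ x with hcψdef
      set u : Fin D → ℂ := fun i => ∑ a, e i a * d i a with hu
      set nd : Fin D → ℝ := fun i => ∑ a, Complex.normSq (d i a) with hnd
      have hsum1 : ∑ a, s⁻¹ * ∑ i, α i * Complex.normSq (d i a) = s⁻¹ * ∑ i, α i * nd i := by
        rw [← Finset.mul_sum]
        congr 1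
        rw [Finset.sum_comm]
        exact Finset.sum_congr rfl fun i _ => by rw [← Finset.mul_sum, hnd]
      rw [hsum1]
      -- cψ = ∑ i, α i * u i
      have hcψ : cψ = ∑ i, ((α i:ℝ):ℂ) * u i := by
        rw [hcψdef]
        have h1 : ∀ x : P × Q, conj (v x) * ψ x
            = ∑ i, ((α i:ℝ):ℂ) * (conj (v x) * (e i x.1 * f i x.2)) := by
          intro x; rw [hψ, Finset.mul_sum]
          exact Finset.sum_congr rfl fun i _ => by ring
        simp only [h1]
        rw [Finset.sum_comm]
        refine Finset.sum_congr rfl fun i _ => ?_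
        rw [← Finset.mul_sum]
        congr 1
        rw [hu, Fintype.sum_prod_type]
        refine Finset.sum_congr rfl fun a _ => ?_
        rw [hd, Finset.mul_sum]
        exact Finset.sum_congr rfl fun b _ => by ring
      -- ‖u i‖² ≤ nd i
      have hnormu : ∀ i, ‖u i‖^2 ≤ nd i := by
        intro i
        have h1 : ‖u i‖ ≤ ∑ a, ‖e i a‖ * ‖d i a‖ := by
          calc ‖u i‖ ≤ ∑ a, ‖e i a * d i a‖ := by rw [hu]; exact norm_sum_le _ _
            _ = ∑ a, ‖e i a‖ * ‖d i a‖ := by simp [norm_mul]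
        have h2 : (∑ a, ‖e i a‖ * ‖d i a‖)^2 ≤ (∑ a, ‖e i a‖^2) * (∑ a, ‖d i a‖^2) :=
          Finset.sum_mul_sq_le_sq_mul_sq _ _ _
        have he1 : ∑ a, ‖e i a‖^2 = 1 := by
          have h := he i i
          rw [if_pos rfl] at h
          have h3 : ((∑ a, Complex.normSq (e i a) : ℝ):ℂ) = 1 := by
            push_cast
            rw [← h]
            exact Finset.sum_congr rfl fun a _ => by rw [mul_comm, Complex.mul_conj]
          have h4 : ∑ a, Complex.normSq (e i a) = 1 := by exact_mod_cast h3
          rw [← h4]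
          exact Finset.sum_congr rfl fun a _ => by
            rw [Complex.normSq_eq_norm_sq]
        have hnd' : ∑ a, ‖d i a‖^2 = nd i := by
          rw [hnd]
          exact Finset.sum_congr rfl fun a _ => by
            rw [Complex.normSq_eq_norm_sq]
        calc ‖u i‖^2 ≤ (∑ a, ‖e i a‖ * ‖d i a‖)^2 :=
              pow_le_pow_left₀ (norm_nonneg _) h1 2
          _ ≤ (∑ a, ‖e i a‖^2) * (∑ a, ‖d i a‖^2) := h2
          _ = nd i := by rw [he1, one_mul, hnd']
      have habs : ‖cψ‖ ≤ ∑ i, α i * ‖u i‖ := by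
        rw [hcψ]
        calc ‖∑ i, ((α i:ℝ):ℂ) * u i‖ ≤ ∑ i, ‖((α i:ℝ):ℂ) * u i‖ := norm_sum_le _ _
          _ = ∑ i, α i * ‖u i‖ := Finset.sum_congr rfl fun i _ => by
                rw [norm_mul, Complex.norm_real, Real.norm_eq_abs, abs_of_nonneg (hα i)]
      have hCS : (∑ i, α i * ‖u i‖)^2 ≤ s * ∑ i, α i * ‖u i‖^2 := by
        have h2 := Finset.sum_mul_sq_le_sq_mul_sq Finset.univ
          (fun i => Real.sqrt (α i)) (fun i => Real.sqrt (α i) * ‖u i‖)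
        calc (∑ i, α i * ‖u i‖)^2
            = (∑ i, Real.sqrt (α i) * (Real.sqrt (α i) * ‖u i‖))^2 := by
              congr 1
              exact Finset.sum_congr rfl fun i _ => by
                rw [← mul_assoc, Real.mul_self_sqrt (hα i)]
          _ ≤ (∑ i, Real.sqrt (α i)^2) * (∑ i, (Real.sqrt (α i) * ‖u i‖)^2) := h2
          _ = s * ∑ i, α i * ‖u i‖^2 := by
              congr 1
              · rw [hs_def]
                exact Finset.sum_congr rfl fun i _ => Real.sq_sqrt (hα i)
              · exact Finset.sum_congr rfl fun i _ => by
                  rw [mul_pow, Real.sq_sqrt (hα i)]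
      have key : Complex.normSq cψ ≤ s * ∑ i, α i * nd i := by
        have h5 : Complex.normSq cψ = ‖cψ‖^2 := by
          rw [Complex.normSq_eq_norm_sq]
        rw [h5]
        calc ‖cψ‖^2 ≤ (∑ i, α i * ‖u i‖)^2 := pow_le_pow_left₀ (norm_nonneg _) habs 2
          _ ≤ s * ∑ i, α i * ‖u i‖^2 := hCS
          _ ≤ s * ∑ i, α i * nd i := by
              refine mul_le_mul_of_nonneg_left ?_ hs_nonneg
              exact Finset.sum_le_sum fun i _ => mul_le_mul_of_nonneg_left (hnormu i) (hα i)
      have hfinal : s^2 * (s⁻¹ * (∑ i, α i * nd i)) = s * ∑ i, α i * nd i := by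
        field_simp
      rw [hfinal]
      linarith
  have : Hmin (outer ψ) = sSup S := by rw [Hmin, hS]
  rw [this]
  exact IsGreatest.csSup_eq ⟨hmem, hub⟩
end

section
/- Let Φ_avg = 2^{-k} ∑_{j=α}^{k+α} Π_{j-α}^R ⊗ Π_j^A / C(n,j), where Π_m^R projects onto the weight-m subspace of k qubits (register R) and Π_j^A onto the weight-j subspace of n qubits (register A). Then averaging U(|φ̂^{(k)}⟩⟨φ̂^{(k)}|^{A₁R} ⊗ |ψ_α⟩⟨ψ_α|^{A₂})U† over the group of block-diagonal unitaries U = ⊕_j U_j (U_j unitary on the weight-j subspace) with respect to Haar measure on each block yields Φ_avg; here |φ̂^{(k)}⟩ = 2^{-k/2}∑_{v∈{0,1}^k}|v⟩|v⟩ is k EPR pairs between A₁ and R, and |ψ_α⟩ has Hamming weight α on the n−k qubits A₂. -/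
open Matrix MeasureTheory
open scoped ComplexOrder Kronecker ComplexConjugate

/-- The Hamming weight of a bit string. -/
def wt {m : ℕ} (v : Fin m → Fin 2) : ℕ := ∑ i, (v i : ℕ)

/-- The total Hamming weight operator on the `n`-qubit space split as
(k qubits) ⊗ (n-k qubits). -/
def hamOpPair (k m : ℕ) :
    Matrix ((Fin k → Fin 2) × (Fin m → Fin 2)) ((Fin k → Fin 2) × (Fin m → Fin 2)) ℂ :=
  Matrix.diagonal fun v => ((wt v.1 + wt v.2 : ℕ) : ℂ)

noncomputable instance {m n : Type*} : MeasurableSpace (Matrix m n ℂ) :=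
  inferInstanceAs (MeasurableSpace (m → n → ℂ))

/-- A charge-conserving (block-diagonal w.r.t. Hamming weight) unitary on `n = k + (n-k)`
qubits: a unitary of the form `⊕_j U_j` with `U_j` unitary on the weight-`j` subspace,
equivalently a unitary commuting with the Hamming weight operator. -/
def IsChargeConservingUnitary (k m : ℕ)
    (U : Matrix ((Fin k → Fin 2) × (Fin m → Fin 2)) ((Fin k → Fin 2) × (Fin m → Fin 2)) ℂ) :
    Prop :=
  U ∈ unitary (Matrix ((Fin k → Fin 2) × (Fin m → Fin 2))
      ((Fin k → Fin 2) × (Fin m → Fin 2)) ℂ) ∧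
    U * hamOpPair k m = hamOpPair k m * U

lemma fin2_cast : ∀ x : Fin 2, (x : ℕ) = if x = 1 then 1 else 0 := by decide

lemma wt_le {m : ℕ} (v : Fin m → Fin 2) : wt v ≤ m := by
  calc wt v ≤ ∑ _i : Fin m, 1 := Finset.sum_le_sum (fun i _ => by
        have := (v i).isLt; omega)
    _ = m := by simp

lemma card_wt_single (ι : Type*) [Fintype ι] [DecidableEq ι] (j : ℕ) :
    (Finset.univ.filter fun v : ι → Fin 2 => ∑ i, ((v i : ℕ)) = j).card
      = (Fintype.card ι).choose j := by
  rw [← Finset.card_univ, ← Finset.card_powersetCard]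
  refine Finset.card_nbij' (fun v => Finset.univ.filter fun i => v i = 1)
    (fun s => fun i => if i ∈ s then 1 else 0) ?_ ?_ ?_ ?_
  · intro v hv
    simp only [Finset.mem_coe] at hv ⊢
    rw [Finset.mem_powersetCard_univ]
    rw [Finset.mem_filter] at hv
    rw [Finset.card_filter, ← hv.2]
    exact (Finset.sum_congr rfl fun i _ => (fin2_cast (v i))).symm
  · intro s hs
    simp only [Finset.mem_coe] at hs ⊢
    rw [Finset.mem_powersetCard_univ] at hs
    rw [Finset.mem_filter]
    refine ⟨Finset.mem_univ _, ?_⟩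
    rw [← hs]
    have : ∀ i : ι, ((if i ∈ s then (1 : Fin 2) else 0 : Fin 2) : ℕ)
        = (if i ∈ s then 1 else 0) := fun i => by split_ifs <;> rfl
    calc ∑ i : ι, ((fun s i => if i ∈ s then (1 : Fin 2) else 0) s i : ℕ)
        = ∑ i : ι, (if i ∈ s then (1 : ℕ) else 0) :=
          Finset.sum_congr rfl fun i _ => this i
      _ = s.card := by simp [Finset.sum_ite_mem]
  · intro v hv
    funext i
    simp only [Finset.mem_filter, Finset.mem_univ, true_and]
    have h2 : v i = 0 ∨ v i = 1 := by omega
    rcases h2 with h | h <;> simp [h]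
  · intro s hs
    ext i
    simp only [Finset.mem_filter, Finset.mem_univ, true_and]
    split_ifs with h <;> simp [h]

lemma card_wt_pair (k m j : ℕ) :
    (Finset.univ.filter fun a : (Fin k → Fin 2) × (Fin m → Fin 2) =>
      wt a.1 + wt a.2 = j).card = (k + m).choose j := by
  have key := card_wt_single (Fin k ⊕ Fin m) j
  rw [Fintype.card_sum, Fintype.card_fin, Fintype.card_fin] at key
  rw [← key]
  refine Finset.card_nbij' (fun p => Sum.elim p.1 p.2)
    (fun v => (fun i => v (Sum.inl i), fun i => v (Sum.inr i))) ?_ ?_ ?_ ?_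
  · intro p hp
    simp only [Finset.mem_coe] at hp ⊢
    rw [Finset.mem_filter] at hp ⊢
    refine ⟨Finset.mem_univ _, ?_⟩
    rw [Fintype.sum_sum_type]
    exact hp.2
  · intro v hv
    simp only [Finset.mem_coe] at hv ⊢
    rw [Finset.mem_filter] at hv ⊢
    refine ⟨Finset.mem_univ _, ?_⟩
    rw [← hv.2, Fintype.sum_sum_type]
    rfl
  · intro p hp; rfl
  · intro v hv; funext i; cases i <;> rfl

section aux
variable {k m : ℕ}

local notation "I" => (Fin k → Fin 2) × (Fin m → Fin 2)

/-- column orthonormality -/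
lemma unitary_col {ι : Type*} [Fintype ι] [DecidableEq ι] {U : Matrix ι ι ℂ}
    (hU : U ∈ unitary (Matrix ι ι ℂ)) (c d : ι) :
    ∑ a, conj (U a c) * U a d = if c = d then 1 else 0 := by
  have h1 : (star U * U) c d = (1 : Matrix ι ι ℂ) c d := by rw [(Unitary.mem_iff.mp hU).1]
  rw [Matrix.mul_apply, Matrix.one_apply] at h1
  simpa [Matrix.star_apply, Complex.star_def] using h1

/-- entries of a unitary have norm at most 1 -/
lemma unitary_entry_le {ι : Type*} [Fintype ι] [DecidableEq ι] {U : Matrix ι ι ℂ}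
    (hU : U ∈ unitary (Matrix ι ι ℂ)) (a b : ι) : ‖U a b‖ ≤ 1 := by
  have h1 := unitary_col hU b b
  simp only [if_pos rfl] at h1
  have h2 : ∀ x : ι, conj (U x b) * U x b = (Complex.normSq (U x b) : ℂ) := fun x => by
    rw [Complex.normSq_eq_conj_mul_self]
  rw [Finset.sum_congr rfl (fun x _ => h2 x)] at h1
  have h3 : (∑ x, Complex.normSq (U x b) : ℝ) = 1 := by
    have := congrArg Complex.re h1
    simpa using this
  have h4 : Complex.normSq (U a b) ≤ 1 := by
    rw [← h3]
    exact Finset.single_le_sum (f := fun x => Complex.normSq (U x b))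
      (fun x _ => Complex.normSq_nonneg _) (Finset.mem_univ a)
  have h5 : ‖U a b‖ ^ 2 ≤ 1 := by rwa [Complex.sq_norm]
  nlinarith [norm_nonneg (U a b)]

lemma ccu_wt_eq {U : Matrix I I ℂ} (hU : IsChargeConservingUnitary k m U)
    {a b : I} (h : U a b ≠ 0) : wt a.1 + wt a.2 = wt b.1 + wt b.2 := by
  have h0 := congrFun (congrFun hU.2 a) b
  rw [hamOpPair, Matrix.mul_diagonal, Matrix.diagonal_mul] at h0
  have h1 : ((wt a.1 + wt a.2 : ℕ) : ℂ) * U a b = ((wt b.1 + wt b.2 : ℕ) : ℂ) * U a b := by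
    rw [← h0]; ring
  have h2 := mul_right_cancel₀ h h1
  exact_mod_cast h2

/-- The key sum: for a charge-conserving unitary,
`∑_{a : wt a = j} U a c * conj (U a d) = [c = d ∧ wt c = j]`. -/
lemma ccu_key_sum {U : Matrix I I ℂ} (hU : IsChargeConservingUnitary k m U)
    (c d : I) (j : ℕ) :
    ∑ a : I, (if wt a.1 + wt a.2 = j then U a c * conj (U a d) else 0)
      = if c = d ∧ wt c.1 + wt c.2 = j then 1 else 0 := by
  by_cases hc : wt c.1 + wt c.2 = j
  · have hterm : ∀ a : I, (if wt a.1 + wt a.2 = j then U a c * conj (U a d) else 0)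
        = U a c * conj (U a d) := by
      intro a
      split_ifs with h
      · rfl
      · by_cases hz : U a c = 0
        · rw [hz, zero_mul]
        · exact absurd (ccu_wt_eq hU hz ▸ hc) h
    rw [Finset.sum_congr rfl fun a _ => hterm a]
    have hconj : (∑ a : I, U a c * conj (U a d)) = conj (∑ a : I, conj (U a c) * U a d) := by
      rw [_root_.map_sum]
      exact Finset.sum_congr rfl fun a _ => by
        simp [_root_.map_mul, Complex.conj_conj, mul_comm]
    rw [hconj, unitary_col hU.1 c d]
    by_cases hcd : c = d
    · simp [hcd, hcd ▸ hc]
    · simp [hcd]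
  · have hterm : ∀ a : I, (if wt a.1 + wt a.2 = j then U a c * conj (U a d) else 0) = 0 := by
      intro a
      split_ifs with h
      · by_cases hz : U a c = 0
        · rw [hz, zero_mul]
        · exact absurd (ccu_wt_eq hU hz) (by rw [h]; exact fun hh => hc hh.symm)
      · rfl
    rw [Finset.sum_congr rfl fun a _ => hterm a, Finset.sum_const_zero]
    simp [hc]

/-- sign matrices are charge-conserving unitaries -/
lemma sign_ccu (a0 : I) :
    IsChargeConservingUnitary k m
      (Matrix.diagonal fun a : I => if a = a0 then (-1 : ℂ) else 1) := by
  set e : I → ℂ := fun a => if a = a0 then (-1 : ℂ) else 1 with he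
  have he2 : e * e = 1 := funext fun a => by
    simp only [he, Pi.mul_apply, Pi.one_apply]
    split_ifs <;> norm_num
  have hstar : star (Matrix.diagonal e) = Matrix.diagonal e := by
    rw [Matrix.star_eq_conjTranspose, Matrix.diagonal_conjTranspose]
    exact congrArg Matrix.diagonal (funext fun a => by
      simp only [Pi.star_apply, he]
      split_ifs <;> simp)
  have hdiag : (Matrix.diagonal fun i : I => e i * e i) = 1 := by
    rw [show (fun i : I => e i * e i) = fun _ => (1 : ℂ) from
      funext fun i => congrFun he2 i, Matrix.diagonal_one]
  constructor
  · rw [Unitary.mem_iff, hstar, Matrix.diagonal_mul_diagonal]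
    exact ⟨hdiag, hdiag⟩
  · rw [hamOpPair, Matrix.diagonal_mul_diagonal, Matrix.diagonal_mul_diagonal]
    exact congrArg Matrix.diagonal (funext fun a => mul_comm _ _)

/-- swap matrices are charge-conserving unitaries -/
lemma swap_ccu (a b : I) (hab : wt a.1 + wt a.2 = wt b.1 + wt b.2) :
    IsChargeConservingUnitary k m
      (Matrix.of fun x y : I => if x = Equiv.swap a b y then 1 else 0) := by
  set σ := Equiv.swap a b with hσ
  set V : Matrix I I ℂ := Matrix.of fun x y : I => if x = σ y then 1 else 0 with hV
  have hVapp : ∀ x y : I, V x y = if x = σ y then 1 else 0 := fun x y => rfl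
  have hwt : ∀ y : I, wt (σ y).1 + wt (σ y).2 = wt y.1 + wt y.2 := by
    intro y
    rw [hσ, Equiv.swap_apply_def]
    split_ifs with h1 h2
    · rw [h1, hab]
    · rw [h2, ← hab]
    · rfl
  have hstarV : ∀ x y : I, (star V) x y = if y = σ x then 1 else 0 := by
    intro x y
    rw [Matrix.star_apply, hVapp]
    split_ifs <;> simp
  have hσσ : ∀ u : I, σ (σ u) = u := fun u => Equiv.swap_apply_self a b u
  constructor
  · rw [Unitary.mem_iff]
    constructor
    · ext x y
      rw [Matrix.mul_apply, Matrix.one_apply]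
      have hterm : ∀ z : I, (star V) x z * V z y
          = if z = σ x then (if z = σ y then (1:ℂ) else 0) else 0 := by
        intro z
        rw [hstarV, hVapp]
        split_ifs <;> simp
      rw [Finset.sum_congr rfl fun z _ => hterm z,
        Finset.sum_ite_eq' Finset.univ (σ x) (fun z => if z = σ y then (1:ℂ) else 0)]
      simp only [Finset.mem_univ, if_true]
      by_cases h : x = y
      · simp [h]
      · rw [if_neg (fun hc : σ x = σ y => h (σ.injective hc)), if_neg h]
    · ext x y
      rw [Matrix.mul_apply, Matrix.one_apply]
      have hterm : ∀ z : I, V x z * (star V) z y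
          = if z = σ y then (if x = σ z then (1:ℂ) else 0) else 0 := by
        intro z
        have hiff : (y = σ z) ↔ (z = σ y) :=
          ⟨fun h => by rw [h, hσσ], fun h => by rw [h, hσσ]⟩
        rw [hstarV, hVapp, if_congr hiff rfl rfl]
        split_ifs <;> ring
      rw [Finset.sum_congr rfl fun z _ => hterm z,
        Finset.sum_ite_eq' Finset.univ (σ y) (fun z => if x = σ z then (1:ℂ) else 0)]
      simp [hσσ]
  · ext x y
    rw [hamOpPair, Matrix.mul_diagonal, Matrix.diagonal_mul, hVapp]
    by_cases h : x = σ y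
    · rw [if_pos h, one_mul, mul_one, h]
      exact_mod_cast (congrArg (fun t : ℕ => (t : ℂ)) (hwt y)).symm
    · rw [if_neg h, mul_zero, zero_mul]

end aux

lemma mul_outer_conjT {ι κ : Type*} [Fintype ι] [Fintype κ]
    (A : Matrix κ ι ℂ) (ψ : ι → ℂ) (p q : κ) :
    (A * outer ψ * Aᴴ) p q = (∑ x, A p x * ψ x) * conj (∑ y, A q y * ψ y) := by
  have h1 : ∀ y, (A * outer ψ) p y = ∑ x, A p x * ψ x * conj (ψ y) := by
    intro y
    rw [Matrix.mul_apply]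
    exact Finset.sum_congr rfl fun x _ => by
      show A p x * (ψ x * conj (ψ y)) = _; ring
  rw [Matrix.mul_apply]
  calc ∑ y, (A * outer ψ) p y * Aᴴ y q
      = ∑ y, ∑ x, (A p x * ψ x) * (conj (ψ y) * conj (A q y)) := by
        refine Finset.sum_congr rfl fun y _ => ?_
        rw [h1 y, Matrix.conjTranspose_apply, Finset.sum_mul]
        exact Finset.sum_congr rfl fun x _ => by
          show A p x * ψ x * conj (ψ y) * star (A q y) = _
          rw [Complex.star_def]; ring
    _ = ∑ x, ∑ y, (A p x * ψ x) * (conj (ψ y) * conj (A q y)) := Finset.sum_comm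
    _ = (∑ x, A p x * ψ x) * (∑ y, conj (ψ y) * conj (A q y)) :=
        (Finset.sum_mul_sum _ _ _ _).symm
    _ = (∑ x, A p x * ψ x) * conj (∑ y, A q y * ψ y) := by
        congr 1
        rw [_root_.map_sum]
        exact Finset.sum_congr rfl fun y _ => by rw [_root_.map_mul]; ring

open scoped Kronecker in
lemma kron_outer_entry {ιA ιR : Type*} [Fintype ιA] [Fintype ιR] [DecidableEq ιR]
    (U : Matrix ιA ιA ℂ) (Ψ : ιA × ιR → ℂ) (p q : ιA × ιR) :
    ((U ⊗ₖ (1 : Matrix ιR ιR ℂ)) * outer Ψ * (U ⊗ₖ (1 : Matrix ιR ιR ℂ))ᴴ) p q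
      = (∑ c, U p.1 c * Ψ (c, p.2)) * conj (∑ d, U q.1 d * Ψ (d, q.2)) := by
  rw [mul_outer_conjT]
  have key : ∀ r : ιA × ιR, ∑ x : ιA × ιR, (U ⊗ₖ (1 : Matrix ιR ιR ℂ)) r x * Ψ x
      = ∑ c, U r.1 c * Ψ (c, r.2) := by
    intro r
    rw [Fintype.sum_prod_type]
    refine Finset.sum_congr rfl fun c _ => ?_
    have hterm : ∀ s : ιR, (U ⊗ₖ (1 : Matrix ιR ιR ℂ)) r (c, s) * Ψ (c, s)
        = if s = r.2 then U r.1 c * Ψ (c, s) else 0 := by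
      intro s
      rw [Matrix.kroneckerMap_apply, Matrix.one_apply]
      by_cases h : r.2 = s
      · rw [if_pos h, if_pos h.symm, mul_one]
      · rw [if_neg h, if_neg (fun hc : s = r.2 => h hc.symm), mul_zero, zero_mul]
    rw [Finset.sum_congr rfl fun s _ => hterm s,
      Finset.sum_ite_eq' Finset.univ r.2 (fun s => U r.1 c * Ψ (c, s))]
    simp
  rw [key p, key q]

section meas
variable {k m : ℕ}
local notation "I" => (Fin k → Fin 2) × (Fin m → Fin 2)

lemma measurable_entry {ι κ : Type*} [MeasurableSpace ι] [MeasurableSpace κ] (a : ι) (b : κ) :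
    Measurable (fun U : Matrix ι κ ℂ => U a b) :=
  (measurable_pi_apply b).comp (measurable_pi_apply a)

lemma measurableSet_ccu : MeasurableSet {U : Matrix I I ℂ | IsChargeConservingUnitary k m U} := by
  have hrepr : {U : Matrix I I ℂ | IsChargeConservingUnitary k m U} =
      (⋂ ab : I × I, {U : Matrix I I ℂ |
          (star U * U) ab.1 ab.2 = (1 : Matrix I I ℂ) ab.1 ab.2}) ∩
      ((⋂ ab : I × I, {U : Matrix I I ℂ |
          (U * star U) ab.1 ab.2 = (1 : Matrix I I ℂ) ab.1 ab.2}) ∩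
      (⋂ ab : I × I, {U : Matrix I I ℂ |
          (U * hamOpPair k m) ab.1 ab.2 = (hamOpPair k m * U) ab.1 ab.2})) := by
    ext U
    simp only [Set.mem_inter_iff, Set.mem_iInter, Set.mem_setOf_eq,
      IsChargeConservingUnitary, Unitary.mem_iff]
    constructor
    · rintro ⟨⟨h1, h2⟩, h3⟩
      exact ⟨fun ab => by rw [h1], fun ab => by rw [h2], fun ab => by rw [h3]⟩
    · rintro ⟨h1, h2, h3⟩
      refine ⟨⟨?_, ?_⟩, ?_⟩
      · ext x y; exact h1 (x, y)
      · ext x y; exact h2 (x, y)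
      · ext x y; exact h3 (x, y)
  rw [hrepr]
  have hmeasUU : ∀ ab : I × I, Measurable (fun U : Matrix I I ℂ => (star U * U) ab.1 ab.2) := by
    intro ab
    have : (fun U : Matrix I I ℂ => (star U * U) ab.1 ab.2)
        = fun U => ∑ c, star (U c ab.1) * U c ab.2 := by
      funext U
      rw [Matrix.mul_apply]
      exact Finset.sum_congr rfl fun c _ => rfl
    rw [this]
    exact Finset.measurable_sum _ fun c _ =>
      ((continuous_star.measurable.comp (measurable_entry c ab.1)).mul (measurable_entry c ab.2))
  have hmeasUU' : ∀ ab : I × I, Measurable (fun U : Matrix I I ℂ => (U * star U) ab.1 ab.2) := by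
    intro ab
    have : (fun U : Matrix I I ℂ => (U * star U) ab.1 ab.2)
        = fun U => ∑ c, U ab.1 c * star (U ab.2 c) := by
      funext U
      rw [Matrix.mul_apply]
      exact Finset.sum_congr rfl fun c _ => rfl
    rw [this]
    exact Finset.measurable_sum _ fun c _ =>
      ((measurable_entry ab.1 c).mul (continuous_star.measurable.comp (measurable_entry ab.2 c)))
  have hmeasD : ∀ ab : I × I, Measurable (fun U : Matrix I I ℂ => (U * hamOpPair k m) ab.1 ab.2) := by
    intro ab
    have : (fun U : Matrix I I ℂ => (U * hamOpPair k m) ab.1 ab.2)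
        = fun U => U ab.1 ab.2 * ((wt ab.2.1 + wt ab.2.2 : ℕ) : ℂ) := by
      funext U
      rw [hamOpPair, Matrix.mul_diagonal]
    rw [this]
    exact (measurable_entry ab.1 ab.2).mul_const _
  have hmeasD' : ∀ ab : I × I, Measurable (fun U : Matrix I I ℂ => (hamOpPair k m * U) ab.1 ab.2) := by
    intro ab
    have : (fun U : Matrix I I ℂ => (hamOpPair k m * U) ab.1 ab.2)
        = fun U => ((wt ab.1.1 + wt ab.1.2 : ℕ) : ℂ) * U ab.1 ab.2 := by
      funext U
      rw [hamOpPair, Matrix.diagonal_mul]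
    rw [this]
    exact (measurable_entry ab.1 ab.2).const_mul _
  refine MeasurableSet.inter ?_ (MeasurableSet.inter ?_ ?_)
  · exact MeasurableSet.iInter fun ab => measurableSet_eq_fun (hmeasUU ab) (measurable_const)
  · exact MeasurableSet.iInter fun ab => measurableSet_eq_fun (hmeasUU' ab) (measurable_const)
  · exact MeasurableSet.iInter fun ab => measurableSet_eq_fun (hmeasD ab) (hmeasD' ab)

end meas


lemma sum_sum_ite_eq {ι : Type*} [Fintype ι] [DecidableEq ι] (g : ι → ι → ℂ) (x0 y0 : ι) :
    (∑ x, ∑ y, if x = x0 then (if y = y0 then g x y else 0) else 0) = g x0 y0 := by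
  have h1 : ∀ x, (∑ y, if x = x0 then (if y = y0 then g x y else 0) else 0)
      = if x = x0 then g x y0 else 0 := by
    intro x
    by_cases hx : x = x0 <;> simp [hx, Finset.sum_ite_eq']
  rw [Finset.sum_congr rfl fun x _ => h1 x,
    Finset.sum_ite_eq' Finset.univ x0 (fun x => g x y0)]
  simp

section main
variable {k m : ℕ}

local notation "II" => (Fin k → Fin 2) × (Fin m → Fin 2)
local notation "JJ" => ((Fin k → Fin 2) × (Fin m → Fin 2)) × (Fin k → Fin 2)

/-- the entry function of `(U ⊗ 1) |Ψ⟩⟨Ψ| (U ⊗ 1)†`. -/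
noncomputable def gEnt (Ψ : JJ → ℂ) (p q : JJ) (U : Matrix II II ℂ) : ℂ :=
  (∑ c, U p.1 c * Ψ (c, p.2)) * conj (∑ d, U q.1 d * Ψ (d, q.2))

lemma measurable_gEnt (Ψ : JJ → ℂ) (p q : JJ) : Measurable (gEnt Ψ p q) := by
  apply Measurable.mul
  · exact Finset.measurable_sum _ fun c _ => (measurable_entry p.1 c).mul_const _
  · exact continuous_star.measurable.comp
      (Finset.measurable_sum _ fun d _ => (measurable_entry q.1 d).mul_const _)

lemma gEnt_bound (Ψ : JJ → ℂ) (p q : JJ) {U : Matrix II II ℂ}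
    (hU : IsChargeConservingUnitary k m U) :
    ‖gEnt Ψ p q U‖ ≤ (∑ c : II, ‖Ψ (c, p.2)‖) * (∑ d : II, ‖Ψ (d, q.2)‖) := by
  have h1 : ∀ r : JJ, ‖∑ c, U r.1 c * Ψ (c, r.2)‖ ≤ ∑ c : II, ‖Ψ (c, r.2)‖ := by
    intro r
    refine (norm_sum_le _ _).trans (Finset.sum_le_sum fun c _ => ?_)
    rw [norm_mul]
    calc ‖U r.1 c‖ * ‖Ψ (c, r.2)‖ ≤ 1 * ‖Ψ (c, r.2)‖ :=
          mul_le_mul_of_nonneg_right (unitary_entry_le hU.1 _ _) (norm_nonneg _)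
      _ = ‖Ψ (c, r.2)‖ := one_mul _
  rw [gEnt, norm_mul, RCLike.norm_conj]
  exact mul_le_mul (h1 p) (h1 q) (norm_nonneg _)
    (Finset.sum_nonneg fun c _ => norm_nonneg _)

variable (μ : Measure (Matrix ((Fin k → Fin 2) × (Fin m → Fin 2))
    ((Fin k → Fin 2) × (Fin m → Fin 2)) ℂ))

lemma ae_ccu [IsProbabilityMeasure μ]
    (hsupp : μ {U | IsChargeConservingUnitary k m U} = 1) :
    ∀ᵐ U ∂μ, IsChargeConservingUnitary k m U := by
  rw [MeasureTheory.ae_iff]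
  have h : {U : Matrix II II ℂ | ¬ IsChargeConservingUnitary k m U}
      = {U : Matrix II II ℂ | IsChargeConservingUnitary k m U}ᶜ := rfl
  rw [h, prob_compl_eq_zero_iff measurableSet_ccu]
  exact hsupp

lemma integrable_gEnt [IsProbabilityMeasure μ]
    (hsupp : μ {U | IsChargeConservingUnitary k m U} = 1) (Ψ : JJ → ℂ) (p q : JJ) :
    Integrable (gEnt Ψ p q) μ := by
  refine Integrable.mono'
    (integrable_const ((∑ c : II, ‖Ψ (c, p.2)‖) * (∑ d : II, ‖Ψ (d, q.2)‖)))
    (measurable_gEnt Ψ p q).aestronglyMeasurable ?_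
  exact (ae_ccu μ hsupp).mono fun U hU => gEnt_bound Ψ p q hU

/-- the averaged matrix -/
noncomputable def Mavg (Ψ : JJ → ℂ) (p q : JJ) : ℂ := ∫ U, gEnt Ψ p q U ∂μ

lemma Mavg_inv [IsProbabilityMeasure μ]
    (hsupp : μ {U | IsChargeConservingUnitary k m U} = 1)
    (hinv : ∀ V, IsChargeConservingUnitary k m V → μ.map (fun U => V * U) = μ)
    {V : Matrix II II ℂ} (hV : IsChargeConservingUnitary k m V) (Ψ : JJ → ℂ) (p q : JJ) :
    Mavg μ Ψ p q
      = ∑ x : II, ∑ y : II, V p.1 x * conj (V q.1 y) * Mavg μ Ψ (x, p.2) (y, q.2) := by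
  have hmeasmul : Measurable (fun U : Matrix II II ℂ => V * U) := by
    refine measurable_pi_lambda _ fun a => measurable_pi_lambda _ fun b => ?_
    simp only [Matrix.mul_apply]
    exact Finset.measurable_sum _ fun c _ => (measurable_entry c b).const_mul _
  have hmap : Mavg μ Ψ p q = ∫ U, gEnt Ψ p q (V * U) ∂μ := by
    rw [Mavg]
    conv_lhs => rw [← hinv V hV]
    rw [integral_map hmeasmul.aemeasurable (measurable_gEnt Ψ p q).aestronglyMeasurable]
  have hexp : ∀ U, gEnt Ψ p q (V * U)
      = ∑ x : II, ∑ y : II, V p.1 x * conj (V q.1 y) * gEnt Ψ (x, p.2) (y, q.2) U := by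
    intro U
    have hcol : ∀ r : JJ, ∑ c, (V * U) r.1 c * Ψ (c, r.2)
        = ∑ x : II, V r.1 x * ∑ c, U x c * Ψ (c, r.2) := by
      intro r
      calc ∑ c, (V * U) r.1 c * Ψ (c, r.2)
          = ∑ c, ∑ x, V r.1 x * U x c * Ψ (c, r.2) := by
            refine Finset.sum_congr rfl fun c _ => ?_
            rw [Matrix.mul_apply, Finset.sum_mul]
        _ = ∑ x, ∑ c, V r.1 x * U x c * Ψ (c, r.2) := Finset.sum_comm
        _ = ∑ x, V r.1 x * ∑ c, U x c * Ψ (c, r.2) := by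
            refine Finset.sum_congr rfl fun x _ => ?_
            rw [Finset.mul_sum]
            exact Finset.sum_congr rfl fun c _ => by ring
    show (∑ c, (V * U) p.1 c * Ψ (c, p.2)) * conj (∑ d, (V * U) q.1 d * Ψ (d, q.2)) = _
    rw [hcol p, hcol q, _root_.map_sum, Finset.sum_mul_sum]
    refine Finset.sum_congr rfl fun x _ => Finset.sum_congr rfl fun y _ => ?_
    rw [_root_.map_mul]
    show _ = V p.1 x * conj (V q.1 y) *
      ((∑ c, U x c * Ψ (c, p.2)) * conj (∑ d, U y d * Ψ (d, q.2)))
    ring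
  rw [hmap, show (fun U => gEnt Ψ p q (V * U)) = fun U =>
      ∑ x : II, ∑ y : II, V p.1 x * conj (V q.1 y) * gEnt Ψ (x, p.2) (y, q.2) U
      from funext hexp]
  have hint1 : ∀ x y : II,
      Integrable (fun U => V p.1 x * conj (V q.1 y) * gEnt Ψ (x, p.2) (y, q.2) U) μ :=
    fun x y => (integrable_gEnt μ hsupp Ψ (x, p.2) (y, q.2)).const_mul _
  rw [integral_finset_sum _ fun x _ => integrable_finset_sum _ fun y _ => hint1 x y]
  refine Finset.sum_congr rfl fun x _ => ?_
  rw [integral_finset_sum _ fun y _ => hint1 x y]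
  refine Finset.sum_congr rfl fun y _ => ?_
  rw [Mavg]
  simp_rw [← smul_eq_mul (α := ℂ)]
  rw [integral_smul]

lemma Mavg_sum [IsProbabilityMeasure μ]
    (hsupp : μ {U | IsChargeConservingUnitary k m U} = 1)
    (Ψ : JJ → ℂ) (j : ℕ) (r s : Fin k → Fin 2) :
    ∑ a : II, (if wt a.1 + wt a.2 = j then Mavg μ Ψ (a, r) (a, s) else 0)
      = ∑ b : II, (if wt b.1 + wt b.2 = j then Ψ (b, r) * conj (Ψ (b, s)) else 0) := by
  have hint : ∀ a : II, Integrable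
      (fun U => if wt a.1 + wt a.2 = j then gEnt Ψ (a, r) (a, s) U else 0) μ := by
    intro a
    split_ifs
    · exact integrable_gEnt μ hsupp Ψ (a, r) (a, s)
    · exact integrable_const 0
  have h1 : ∀ a : II, (if wt a.1 + wt a.2 = j then Mavg μ Ψ (a, r) (a, s) else 0)
      = ∫ U, (if wt a.1 + wt a.2 = j then gEnt Ψ (a, r) (a, s) U else 0) ∂μ := by
    intro a
    split_ifs
    · rfl
    · rw [integral_zero]
  rw [Finset.sum_congr rfl fun a _ => h1 a, ← integral_finset_sum _ fun a _ => hint a]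
  have hptw : ∀ U : Matrix II II ℂ, IsChargeConservingUnitary k m U →
      (∑ a : II, if wt a.1 + wt a.2 = j then gEnt Ψ (a, r) (a, s) U else 0)
        = ∑ b : II, (if wt b.1 + wt b.2 = j then Ψ (b, r) * conj (Ψ (b, s)) else 0) := by
    intro U hU
    have hterm : ∀ a : II, (if wt a.1 + wt a.2 = j then gEnt Ψ (a, r) (a, s) U else 0)
        = ∑ c : II, ∑ d : II, (if wt a.1 + wt a.2 = j then U a c * conj (U a d) else 0)
            * (Ψ (c, r) * conj (Ψ (d, s))) := by
      intro a
      split_ifs with h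
      · show (∑ c, U a c * Ψ (c, r)) * conj (∑ d, U a d * Ψ (d, s)) = _
        rw [_root_.map_sum, Finset.sum_mul_sum]
        refine Finset.sum_congr rfl fun c _ => Finset.sum_congr rfl fun d _ => ?_
        rw [_root_.map_mul]
        ring
      · symm
        refine Finset.sum_eq_zero fun c _ => Finset.sum_eq_zero fun d _ => ?_
        rw [zero_mul]
    rw [Finset.sum_congr rfl fun a _ => hterm a]
    rw [Finset.sum_comm]
    rw [Finset.sum_congr rfl fun c _ => Finset.sum_comm]
    have hkey : ∀ c d : II,
        ∑ a : II, (if wt a.1 + wt a.2 = j then U a c * conj (U a d) else 0)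
            * (Ψ (c, r) * conj (Ψ (d, s)))
          = (if c = d ∧ wt c.1 + wt c.2 = j then 1 else 0) * (Ψ (c, r) * conj (Ψ (d, s))) := by
      intro c d
      rw [← Finset.sum_mul, ccu_key_sum hU]
    rw [Finset.sum_congr rfl fun c _ => Finset.sum_congr rfl fun d _ => hkey c d]
    refine Finset.sum_congr rfl fun c _ => ?_
    have hcollapse : ∀ d : II,
        (if c = d ∧ wt c.1 + wt c.2 = j then (1:ℂ) else 0) * (Ψ (c, r) * conj (Ψ (d, s)))
          = if d = c then (if wt c.1 + wt c.2 = j then Ψ (c, r) * conj (Ψ (d, s)) else 0)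
            else 0 := by
      intro d
      by_cases hd : d = c
      · subst hd
        by_cases hw : wt d.1 + wt d.2 = j <;> simp [hw]
      · rw [if_neg (fun h : c = d ∧ _ => hd h.1.symm), if_neg hd, zero_mul]
    rw [Finset.sum_congr rfl fun d _ => hcollapse d,
      Finset.sum_ite_eq' Finset.univ c
        (fun d => if wt c.1 + wt c.2 = j then Ψ (c, r) * conj (Ψ (d, s)) else 0)]
    simp
  rw [integral_congr_ae ((ae_ccu μ hsupp).mono fun U hU => hptw U hU), integral_const]
  simp [measure_univ]

end main


section psiclosed
variable {k m α : ℕ}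
local notation "II" => (Fin k → Fin 2) × (Fin m → Fin 2)
local notation "JJ" => ((Fin k → Fin 2) × (Fin m → Fin 2)) × (Fin k → Fin 2)

lemma psi_sum_closed (ψα : (Fin m → Fin 2) → ℂ)
    (hψα : ∀ w, ψα w ≠ 0 → wt w = α)
    (hψnorm : ∑ w, Complex.normSq (ψα w) = 1)
    (Ψ : JJ → ℂ)
    (hΨ : ∀ p : JJ, Ψ p = ((Real.sqrt (2 ^ k) : ℝ) : ℂ)⁻¹ *
      (if p.1.1 = p.2 then 1 else 0) * ψα p.1.2)
    (j : ℕ) (r s : Fin k → Fin 2) :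
    ∑ b : II, (if wt b.1 + wt b.2 = j then Ψ (b, r) * conj (Ψ (b, s)) else 0)
      = if r = s ∧ j = wt r + α then ((2 : ℂ) ^ k)⁻¹ else 0 := by
  set c0 : ℂ := ((Real.sqrt (2 ^ k) : ℝ) : ℂ)⁻¹ with hc0def
  have hc0 : c0 * conj c0 = ((2 : ℂ) ^ k)⁻¹ := by
    rw [hc0def, map_inv₀, Complex.conj_ofReal, ← mul_inv, ← Complex.ofReal_mul,
      Real.mul_self_sqrt (by positivity)]
    push_cast
    ring
  rw [Fintype.sum_prod_type]
  rw [Finset.sum_eq_single r (fun b1 _ hb1 => Finset.sum_eq_zero fun b2 _ => by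
      have hz : Ψ ((b1, b2), r) = 0 := by rw [hΨ]; simp [hb1]
      rw [hz, zero_mul]
      simp)
    (fun h => absurd (Finset.mem_univ r) h)]
  by_cases hrs : r = s
  · subst hrs
    have hterm : ∀ b2 : Fin m → Fin 2,
        (if wt r + wt b2 = j then Ψ ((r, b2), r) * conj (Ψ ((r, b2), r)) else 0)
          = if wt r + wt b2 = j then ((2 : ℂ) ^ k)⁻¹ * (Complex.normSq (ψα b2) : ℂ)
            else 0 := by
      intro b2
      refine if_congr Iff.rfl ?_ rfl
      rw [hΨ]
      simp only [eq_self_iff_true, if_true, mul_one]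
      rw [_root_.map_mul]
      calc c0 * ψα b2 * (conj c0 * conj (ψα b2))
          = (c0 * conj c0) * (ψα b2 * conj (ψα b2)) := by ring
        _ = ((2 : ℂ) ^ k)⁻¹ * (Complex.normSq (ψα b2) : ℂ) := by
            rw [hc0, Complex.mul_conj]
    rw [Finset.sum_congr rfl fun b2 _ => hterm b2]
    have hpull : ∀ b2 : Fin m → Fin 2,
        (if wt r + wt b2 = j then ((2 : ℂ) ^ k)⁻¹ * (Complex.normSq (ψα b2) : ℂ) else 0)
          = ((2 : ℂ) ^ k)⁻¹ * (if wt r + wt b2 = j then (Complex.normSq (ψα b2) : ℂ) else 0) := by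
      intro b2
      split_ifs <;> simp
    rw [Finset.sum_congr rfl fun b2 _ => hpull b2, ← Finset.mul_sum]
    have hinner : ∑ b2 : Fin m → Fin 2,
        (if wt r + wt b2 = j then (Complex.normSq (ψα b2) : ℂ) else 0)
          = if j = wt r + α then 1 else 0 := by
      by_cases hj : j = wt r + α
      · rw [if_pos hj]
        have heach : ∀ b2 : Fin m → Fin 2,
            (if wt r + wt b2 = j then (Complex.normSq (ψα b2) : ℂ) else 0)
              = (Complex.normSq (ψα b2) : ℂ) := by
          intro b2
          by_cases hw : wt b2 = α
          · rw [if_pos (by omega)]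
          · have h0 : ψα b2 = 0 := by
              by_contra h
              exact hw (hψα _ h)
            rw [h0]
            simp
        rw [Finset.sum_congr rfl fun b2 _ => heach b2]
        exact_mod_cast hψnorm
      · rw [if_neg hj]
        refine Finset.sum_eq_zero fun b2 _ => ?_
        split_ifs with hcond
        · have h0 : ψα b2 = 0 := by
            by_contra h
            exact hj (by rw [← hψα _ h]; omega)
          rw [h0]
          simp
        · rfl
    rw [hinner]
    by_cases hj : j = wt r + α <;> simp [hj]
  · rw [if_neg (fun h => hrs h.1)]
    refine Finset.sum_eq_zero fun b2 _ => ?_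
    have hz : Ψ ((r, b2), s) = 0 := by rw [hΨ]; simp [hrs]
    rw [hz]
    simp

end psiclosed

/-- Averaging `U(|φ̂^{(k)}⟩⟨φ̂^{(k)}|^{A₁R} ⊗ |ψ_α⟩⟨ψ_α|^{A₂})U†` over Haar-random
block-diagonal (charge-conserving) unitaries `U` yields
`Φ_avg = 2^{-k} ∑_{j=α}^{k+α} Π_{j-α}^R ⊗ Π_j^A / C(n,j)`. -/
theorem haar_average_encoded_EPR {n k α : ℕ} (hk : k ≤ n)
    (ψα : (Fin (n - k) → Fin 2) → ℂ)
    (hψα : ∀ w, ψα w ≠ 0 → wt w = α)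
    (hψnorm : ∑ w, Complex.normSq (ψα w) = 1)
    (μ : Measure (Matrix ((Fin k → Fin 2) × (Fin (n - k) → Fin 2))
      ((Fin k → Fin 2) × (Fin (n - k) → Fin 2)) ℂ))
    [IsProbabilityMeasure μ]
    (hsupp : μ {U | IsChargeConservingUnitary k (n - k) U} = 1)
    (hinv : ∀ V, IsChargeConservingUnitary k (n - k) V →
      μ.map (fun U => V * U) = μ)
    -- the input state: `k` EPR pairs between `A₁` and `R`, tensored with `|ψ_α⟩` on `A₂`
    (Ψ : ((Fin k → Fin 2) × (Fin (n - k) → Fin 2)) × (Fin k → Fin 2) → ℂ)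
    (hΨ : ∀ p, Ψ p = ((Real.sqrt (2 ^ k) : ℝ) : ℂ)⁻¹ *
      (if p.1.1 = p.2 then 1 else 0) * ψα p.1.2)
    -- the claimed average state `Φ_avg`
    (Φavg : Matrix (((Fin k → Fin 2) × (Fin (n - k) → Fin 2)) × (Fin k → Fin 2))
      (((Fin k → Fin 2) × (Fin (n - k) → Fin 2)) × (Fin k → Fin 2)) ℂ)
    (hΦ : ∀ p q, Φavg p q = ((2 : ℂ) ^ k)⁻¹ *
      ∑ j ∈ Finset.Icc α (k + α), ((n.choose j : ℂ))⁻¹ *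
        (if p.1 = q.1 ∧ wt p.1.1 + wt p.1.2 = j then 1 else 0) *
        (if p.2 = q.2 ∧ wt p.2 = j - α then 1 else 0)) :
    ∀ p q,
      (∫ U, ((U ⊗ₖ (1 : Matrix (Fin k → Fin 2) (Fin k → Fin 2) ℂ)) * outer Ψ *
        (U ⊗ₖ (1 : Matrix (Fin k → Fin 2) (Fin k → Fin 2) ℂ))ᴴ) p q ∂μ) = Φavg p q := by
  intro p q
  have hrw : (∫ U, ((U ⊗ₖ (1 : Matrix (Fin k → Fin 2) (Fin k → Fin 2) ℂ)) * outer Ψ *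
      (U ⊗ₖ (1 : Matrix (Fin k → Fin 2) (Fin k → Fin 2) ℂ))ᴴ) p q ∂μ) = Mavg μ Ψ p q := by
    simp only [Mavg, gEnt]
    exact integral_congr_ae (Filter.Eventually.of_forall fun U => kron_outer_entry U Ψ p q)
  rw [hrw, hΦ]
  -- off-diagonal vanishing
  have hoff : ∀ p q : ((Fin k → Fin 2) × (Fin (n - k) → Fin 2)) × (Fin k → Fin 2),
      p.1 ≠ q.1 → Mavg μ Ψ p q = 0 := by
    intro p q hne
    have h := Mavg_inv μ hsupp hinv (sign_ccu p.1) Ψ p q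
    have hterm : ∀ x y : (Fin k → Fin 2) × (Fin (n - k) → Fin 2),
        (Matrix.diagonal fun a => if a = p.1 then (-1 : ℂ) else 1) p.1 x *
          conj ((Matrix.diagonal fun a => if a = p.1 then (-1 : ℂ) else 1) q.1 y) *
          Mavg μ Ψ (x, p.2) (y, q.2)
        = if x = p.1 then (if y = q.1 then
            (-1) * Mavg μ Ψ (x, p.2) (y, q.2) else 0) else 0 := by
      intro x y
      by_cases hx : x = p.1
      · by_cases hy : y = q.1
        · rw [if_pos hx, if_pos hy, hx, hy, Matrix.diagonal_apply_eq,
            Matrix.diagonal_apply_eq, if_pos rfl,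
            if_neg (fun hq : q.1 = p.1 => hne hq.symm)]
          simp
        · rw [if_pos hx, if_neg hy,
            Matrix.diagonal_apply_ne _ (fun hq : q.1 = y => hy hq.symm)]
          simp
      · rw [if_neg hx, Matrix.diagonal_apply_ne _ (fun hq : p.1 = x => hx hq.symm)]
        simp
    rw [Finset.sum_congr rfl (fun x _ => Finset.sum_congr rfl fun y _ => hterm x y),
      sum_sum_ite_eq (fun x y => (-1) * Mavg μ Ψ (x, p.2) (y, q.2)) p.1 q.1] at h
    have hp' : ((p.1, p.2) : _ × _) = p := rfl
    have hq' : ((q.1, q.2) : _ × _) = q := rfl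
    rw [hp', hq'] at h
    linear_combination h / 2
  -- swap invariance on the diagonal
  have hswapM : ∀ (a b : (Fin k → Fin 2) × (Fin (n - k) → Fin 2)) (r s : Fin k → Fin 2),
      wt a.1 + wt a.2 = wt b.1 + wt b.2 →
      Mavg μ Ψ (a, r) (a, s) = Mavg μ Ψ (b, r) (b, s) := by
    intro a b r s hab
    have h := Mavg_inv μ hsupp hinv (swap_ccu a b hab) Ψ (a, r) (a, s)
    have hσσ : ∀ u, Equiv.swap a b (Equiv.swap a b u) = u :=
      fun u => Equiv.swap_apply_self a b u
    have hiff : ∀ x, (a = Equiv.swap a b x) ↔ (x = b) := by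
      intro x
      constructor
      · intro h'
        rw [← hσσ x, ← h']
        exact Equiv.swap_apply_left a b
      · intro h'
        rw [h']
        exact (Equiv.swap_apply_right a b).symm
    have hV : ∀ x, (Matrix.of fun x y => if x = Equiv.swap a b y then (1 : ℂ) else 0) a x
        = if x = b then 1 else 0 := by
      intro x
      show (if a = Equiv.swap a b x then (1 : ℂ) else 0) = _
      exact if_congr (hiff x) rfl rfl
    have hterm : ∀ x y : (Fin k → Fin 2) × (Fin (n - k) → Fin 2),
        (Matrix.of fun x y => if x = Equiv.swap a b y then (1 : ℂ) else 0) a x *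
          conj ((Matrix.of fun x y => if x = Equiv.swap a b y then (1 : ℂ) else 0) a y) *
          Mavg μ Ψ (x, r) (y, s)
        = if x = b then (if y = b then Mavg μ Ψ (x, r) (y, s) else 0) else 0 := by
      intro x y
      rw [hV x, hV y]
      split_ifs <;> simp
    rw [Finset.sum_congr rfl (fun x _ => Finset.sum_congr rfl fun y _ => hterm x y),
      sum_sum_ite_eq (fun x y => Mavg μ Ψ (x, r) (y, s)) b b] at h
    exact h
  -- the weighted sums of diagonal entries
  have hMsum : ∀ (j : ℕ) (r s : Fin k → Fin 2),
      ∑ a : (Fin k → Fin 2) × (Fin (n - k) → Fin 2),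
        (if wt a.1 + wt a.2 = j then Mavg μ Ψ (a, r) (a, s) else 0)
        = if r = s ∧ j = wt r + α then ((2 : ℂ) ^ k)⁻¹ else 0 := by
    intro j r s
    rw [Mavg_sum μ hsupp Ψ j r s, psi_sum_closed ψα hψα hψnorm Ψ hΨ j r s]
  by_cases hpq : p.1 = q.1
  · set j0 := wt p.1.1 + wt p.1.2 with hj0
    have hsum := hMsum j0 p.2 q.2
    have hconst : ∀ a : (Fin k → Fin 2) × (Fin (n - k) → Fin 2),
        (if wt a.1 + wt a.2 = j0 then Mavg μ Ψ (a, p.2) (a, q.2) else 0)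
          = if wt a.1 + wt a.2 = j0 then Mavg μ Ψ (p.1, p.2) (p.1, q.2) else 0 := by
      intro a
      split_ifs with h
      · exact hswapM a p.1 p.2 q.2 (by rw [h, hj0])
      · rfl
    rw [Finset.sum_congr rfl fun a _ => hconst a, ← Finset.sum_filter,
      Finset.sum_const, card_wt_pair, nsmul_eq_mul] at hsum
    have hn : k + (n - k) = n := by omega
    rw [hn] at hsum
    have hNpos : 0 < n.choose j0 := by
      rw [← hn, ← card_wt_pair k (n - k) j0]
      refine Finset.card_pos.mpr ⟨p.1, ?_⟩
      exact Finset.mem_filter.mpr ⟨Finset.mem_univ _, hj0.symm⟩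
    have hNne : ((n.choose j0 : ℂ)) ≠ 0 := by
      exact_mod_cast Nat.pos_iff_ne_zero.mp hNpos
    have hMval : Mavg μ Ψ (p.1, p.2) (p.1, q.2) = ((n.choose j0 : ℂ))⁻¹ *
        (if p.2 = q.2 ∧ j0 = wt p.2 + α then ((2 : ℂ) ^ k)⁻¹ else 0) := by
      rw [← hsum, ← mul_assoc, inv_mul_cancel₀ hNne, one_mul]
    have hgoalL : Mavg μ Ψ p q = Mavg μ Ψ (p.1, p.2) (p.1, q.2) := by
      have hqe : ((p.1, q.2) : _ × _) = q := by rw [hpq]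
      rw [hqe]
    rw [hgoalL, hMval]
    have hterm2 : ∀ j, ((n.choose j : ℂ))⁻¹ *
        (if p.1 = q.1 ∧ wt p.1.1 + wt p.1.2 = j then 1 else 0) *
        (if p.2 = q.2 ∧ wt p.2 = j - α then 1 else 0)
        = if j = j0 then ((n.choose j : ℂ))⁻¹ *
            (if p.2 = q.2 ∧ wt p.2 = j - α then 1 else 0) else 0 := by
      intro j
      by_cases hj : j = j0
      · rw [if_pos hj, if_pos ⟨hpq, hj.symm⟩, mul_one]
      · rw [if_neg hj, if_neg (fun hcon => hj hcon.2.symm), mul_zero, zero_mul]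
    rw [Finset.sum_congr rfl fun j _ => hterm2 j,
      Finset.sum_ite_eq' (Finset.Icc α (k + α)) j0
        (fun j => ((n.choose j : ℂ))⁻¹ * (if p.2 = q.2 ∧ wt p.2 = j - α then 1 else 0))]
    by_cases h2 : p.2 = q.2
    · by_cases h3 : j0 = wt p.2 + α
      · have hwtle : wt p.2 ≤ k := wt_le p.2
        have hicc : j0 ∈ Finset.Icc α (k + α) := Finset.mem_Icc.mpr ⟨by omega, by omega⟩
        rw [if_pos ⟨h2, h3⟩, if_pos hicc, if_pos ⟨h2, by omega⟩]
        ring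
      · rw [if_neg (fun hcon => h3 hcon.2), mul_zero]
        symm
        by_cases hicc : j0 ∈ Finset.Icc α (k + α)
        · rw [if_pos hicc]
          have hni : ¬ (p.2 = q.2 ∧ wt p.2 = j0 - α) := by
            rintro ⟨-, hw⟩
            have := Finset.mem_Icc.mp hicc
            exact h3 (by omega)
          rw [if_neg hni, mul_zero, mul_zero]
        · rw [if_neg hicc, mul_zero]
    · rw [if_neg (fun hcon => h2 hcon.1), mul_zero]
      symm
      by_cases hicc : j0 ∈ Finset.Icc α (k + α)
      · rw [if_pos hicc, if_neg (fun hcon => h2 hcon.1), mul_zero, mul_zero]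
      · rw [if_neg hicc, mul_zero]
  · rw [hoff p q hpq]
    symm
    rw [Finset.sum_eq_zero (fun j _ => by
      rw [if_neg (fun h : p.1 = q.1 ∧ wt p.1.1 + wt p.1.2 = j => hpq h.1),
        mul_zero, zero_mul]), mul_zero]
end

section
/- For β_i = 2^{-k} ∑_{j=0}^k C(k,j) C(n−t, j+α−i)/C(n, j+α), one has the exact identity β_i = (1/n^{falling t}) ∑_{x,y} 2^{-(x+y)} (−1)^y k^{falling(x+y)} C(i,x) C(t−i, y) α^{falling(i−x)} (n−α−x−y)^{falling(t−i−y)}, where the sum is over nonnegative integers x ≤ i and y ≤ t−i. -/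
/-- The falling factorial `x(x-1)⋯(x-n+1)` of a real number. -/
def fallingFactorial (x : ℝ) (n : ℕ) : ℝ := ∏ i ∈ Finset.range n, (x - i)

namespace FF
open Finset

lemma ff_zero (x : ℝ) : fallingFactorial x 0 = 1 := by simp [fallingFactorial]

lemma ff_succ (x : ℝ) (n : ℕ) :
    fallingFactorial x (n+1) = fallingFactorial x n * (x - n) := by
  simp [fallingFactorial, prod_range_succ]

lemma ff_succ_left (x : ℝ) (n : ℕ) :
    fallingFactorial x (n+1) = x * fallingFactorial (x-1) n := by
  rw [fallingFactorial, prod_range_succ']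
  simp only [Nat.cast_zero, sub_zero]
  rw [mul_comm]
  congr 1
  apply Finset.prod_congr rfl
  intro i _
  push_cast
  ring


lemma ff_add (x : ℝ) (m n : ℕ) :
    fallingFactorial x (m+n) = fallingFactorial x m * fallingFactorial (x - m) n := by
  rw [fallingFactorial, prod_range_add]
  congr 1
  apply Finset.prod_congr rfl
  intro i _
  push_cast
  ring

lemma ff_nat (j m : ℕ) : fallingFactorial (j : ℝ) m = (j.descFactorial m : ℝ) := by
  induction m with
  | zero => simp [ff_zero]
  | succ m ih =>
      rw [ff_succ, ih]
      rcases le_or_gt (m+1) j with h | h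
      · rw [Nat.descFactorial_succ, Nat.cast_mul, Nat.cast_sub (by omega)]
        ring
      · rw [Nat.descFactorial_eq_zero_iff_lt.2 h]
        rcases Nat.lt_succ_iff_lt_or_eq.mp h with h' | h'
        · rw [Nat.descFactorial_eq_zero_iff_lt.2 h']; simp
        · subst h'; simp

lemma ff_vander (a b : ℝ) : ∀ s : ℕ, fallingFactorial (a+b) s
    = ∑ x ∈ range (s+1), (s.choose x : ℝ) * fallingFactorial a x * fallingFactorial b (s-x)
  | 0 => by simp [ff_zero]
  | s+1 => by
    rw [ff_succ, ff_vander a b s, Finset.sum_mul]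
    have step : ∀ x ∈ Finset.range (s+1),
        (s.choose x : ℝ) * fallingFactorial a x * fallingFactorial b (s-x) * (a + b - s)
          = (s.choose x : ℝ) * fallingFactorial a (x+1) * fallingFactorial b (s-x)
            + (s.choose x : ℝ) * fallingFactorial a x * fallingFactorial b (s-x+1) := by
      intro x hx
      rw [mem_range] at hx
      have hc : ((s - x : ℕ) : ℝ) = (s : ℝ) - x := by
        rw [Nat.cast_sub (by omega)]
      rw [ff_succ a x, ff_succ b (s-x), hc]
      ring
    rw [Finset.sum_congr rfl step, Finset.sum_add_distrib]
    have hB : (∑ x ∈ range (s+1), (s.choose x : ℝ) * fallingFactorial a x * fallingFactorial b (s-x+1))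
        = (∑ x ∈ range (s+1), (s.choose (x+1) : ℝ) * fallingFactorial a (x+1) * fallingFactorial b (s-x))
          + fallingFactorial b (s+1) := by
      rw [Finset.sum_range_succ'
        (fun x => (s.choose x : ℝ) * fallingFactorial a x * fallingFactorial b (s-x+1)) s]
      congr 1
      · rw [Finset.sum_range_succ]
        rw [Nat.choose_succ_self]
        simp only [Nat.cast_zero, zero_mul, add_zero]
        apply Finset.sum_congr rfl
        intro x hx
        rw [mem_range] at hx
        have hidx : s - (x+1) + 1 = s - x := by omega
        rw [hidx]
      · simp [ff_zero]
    have hT : (∑ x ∈ range (s+1+1), ((s+1).choose x : ℝ) * fallingFactorial a x * fallingFactorial b (s+1-x))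
        = (∑ x ∈ range (s+1), (s.choose x : ℝ) * fallingFactorial a (x+1) * fallingFactorial b (s-x))
          + ((∑ x ∈ range (s+1), (s.choose (x+1) : ℝ) * fallingFactorial a (x+1) * fallingFactorial b (s-x))
            + fallingFactorial b (s+1)) := by
      rw [Finset.sum_range_succ'
        (fun x => ((s+1).choose x : ℝ) * fallingFactorial a x * fallingFactorial b (s+1-x)) (s+1)]
      have hsum : ∀ x ∈ range (s+1),
          (((s+1).choose (x+1) : ℝ)) * fallingFactorial a (x+1) * fallingFactorial b (s+1-(x+1))
            = (s.choose x : ℝ) * fallingFactorial a (x+1) * fallingFactorial b (s-x)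
              + (s.choose (x+1) : ℝ) * fallingFactorial a (x+1) * fallingFactorial b (s-x) := by
        intro x hx
        have hidx : s+1-(x+1) = s - x := by omega
        rw [hidx, Nat.choose_succ_succ]
        push_cast
        ring
      rw [Finset.sum_congr rfl hsum, Finset.sum_add_distrib]
      simp only [Nat.choose_zero_right, Nat.cast_one, one_mul, ff_zero, Nat.sub_zero]
      ring
    rw [hB, hT]

lemma ff_sub_expand (a b : ℝ) : ∀ s : ℕ, fallingFactorial (b - a) s
    = ∑ y ∈ range (s+1), (s.choose y : ℝ) * (-1)^y * fallingFactorial a y * fallingFactorial (b - y) (s - y)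
  | 0 => by simp [ff_zero]
  | s+1 => by
    have harg0 : b - a - 1 = (b - 1) - a := by ring
    rw [ff_succ_left, harg0, ff_sub_expand a (b-1) s, Finset.mul_sum]
    have step : ∀ y ∈ range (s+1),
        (b - a) * ((s.choose y : ℝ) * (-1)^y * fallingFactorial a y * fallingFactorial (b - 1 - y) (s - y))
          = (s.choose y : ℝ) * (-1)^y * fallingFactorial a y * fallingFactorial (b - y) (s - y + 1)
            + (s.choose y : ℝ) * (-1)^(y+1) * fallingFactorial a (y+1) * fallingFactorial (b - ↑y - 1) (s - y) := by
      intro y hy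
      have harg : b - 1 - (y:ℝ) = b - ↑y - 1 := by ring
      rw [harg, ff_succ a y, ff_succ_left (b - ↑y) (s - y)]
      ring
    rw [Finset.sum_congr rfl step, Finset.sum_add_distrib]
    have hB : (∑ y ∈ range (s+1), (s.choose y : ℝ) * (-1)^y * fallingFactorial a y * fallingFactorial (b - y) (s - y + 1))
        = ∑ y ∈ range (s+1), (s.choose y : ℝ) * (-1)^y * fallingFactorial a y * fallingFactorial (b - y) (s + 1 - y) := by
      apply Finset.sum_congr rfl
      intro y hy
      rw [mem_range] at hy
      have hidx : s - y + 1 = s + 1 - y := by omega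
      rw [hidx]
    rw [hB]
    have hA : (∑ y ∈ range (s+1), (s.choose y : ℝ) * (-1)^(y+1) * fallingFactorial a (y+1) * fallingFactorial (b - ↑y - 1) (s - y))
        = (∑ y ∈ range (s+1+1), ((s+1).choose y : ℝ) * (-1)^y * fallingFactorial a y * fallingFactorial (b - y) (s+1-y))
          - ∑ y ∈ range (s+1), (s.choose y : ℝ) * (-1)^y * fallingFactorial a y * fallingFactorial (b - y) (s + 1 - y) := by
      rw [eq_sub_iff_add_eq]
      rw [Finset.sum_range_succ'
        (fun y => ((s+1).choose y : ℝ) * (-1)^y * fallingFactorial a y * fallingFactorial (b - y) (s+1-y)) (s+1)]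
      have hsum : ∀ y ∈ range (s+1),
          (((s+1).choose (y+1) : ℝ)) * (-1)^(y+1) * fallingFactorial a (y+1) * fallingFactorial (b - ↑(y+1)) (s+1-(y+1))
            = (s.choose y : ℝ) * (-1)^(y+1) * fallingFactorial a (y+1) * fallingFactorial (b - ↑y - 1) (s - y)
              + (s.choose (y+1) : ℝ) * (-1)^(y+1) * fallingFactorial a (y+1) * fallingFactorial (b - ↑y - 1) (s - y) := by
        intro y hy
        have hidx : s+1-(y+1) = s - y := by omega
        have hc : (((y:ℕ)+1 : ℕ) : ℝ) = (y:ℝ) + 1 := by push_cast; ring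
        have harg : b - ((y:ℝ)+1) = b - ↑y - 1 := by ring
        rw [hidx, hc, harg, Nat.choose_succ_succ]
        push_cast
        ring
      rw [Finset.sum_congr rfl hsum, Finset.sum_add_distrib]
      have hB2 : (∑ y ∈ range (s+1), (s.choose y : ℝ) * (-1)^y * fallingFactorial a y * fallingFactorial (b - y) (s + 1 - y))
          = (∑ y ∈ range (s+1), (s.choose (y+1) : ℝ) * (-1)^(y+1) * fallingFactorial a (y+1) * fallingFactorial (b - ↑y - 1) (s - y))
            + fallingFactorial b (s+1) := by
        rw [Finset.sum_range_succ'
          (fun y => (s.choose y : ℝ) * (-1)^y * fallingFactorial a y * fallingFactorial (b - y) (s + 1 - y)) s]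
        congr 1
        · rw [Finset.sum_range_succ, Nat.choose_succ_self]
          simp only [Nat.cast_zero, zero_mul, add_zero]
          apply Finset.sum_congr rfl
          intro y hy
          rw [mem_range] at hy
          have hidx : s + 1 - (y+1) = s - y := by omega
          have hc : (((y:ℕ)+1 : ℕ) : ℝ) = (y:ℝ) + 1 := by push_cast; ring
          have harg : b - ((y:ℝ)+1) = b - ↑y - 1 := by ring
          rw [hidx, hc, harg]
        · simp [ff_zero]
      rw [hB2]
      simp only [Nat.choose_zero_right, Nat.cast_one, one_mul, pow_zero, Nat.cast_zero, sub_zero, Nat.sub_zero, ff_zero]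
      ring
    rw [hA]
    ring

lemma nat_sum_choose_desc (k m : ℕ) :
    ∑ j ∈ Finset.range (k+1), k.choose j * j.descFactorial m
      = 2^(k - m) * k.descFactorial m := by
  rcases le_or_gt m k with h | h
  · have hsplit : k + 1 = m + (k - m + 1) := by omega
    rw [hsplit, Finset.sum_range_add]
    have h1 : ∑ j ∈ range m, k.choose j * j.descFactorial m = 0 :=
      Finset.sum_eq_zero fun j hj => by
        rw [mem_range] at hj
        rw [Nat.descFactorial_eq_zero_iff_lt.2 hj, mul_zero]
    rw [h1, zero_add]
    have h2 : ∀ l ∈ range (k - m + 1),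
        k.choose (m + l) * (m + l).descFactorial m = k.descFactorial m * (k - m).choose l := by
      intro l hl
      rw [mem_range] at hl
      rw [Nat.descFactorial_eq_factorial_mul_choose, ← mul_assoc, mul_comm _ (Nat.factorial m),
        mul_assoc, Nat.choose_mul (by omega), Nat.add_sub_cancel_left,
        Nat.descFactorial_eq_factorial_mul_choose]
      ring
    rw [Finset.sum_congr rfl h2, ← Finset.mul_sum, Nat.sum_range_choose, mul_comm]
  · rw [Nat.descFactorial_eq_zero_iff_lt.2 h, mul_zero]
    exact Finset.sum_eq_zero fun j hj => by
      rw [mem_range] at hj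
      rw [Nat.descFactorial_eq_zero_iff_lt.2 (by omega), mul_zero]

lemma sum_choose_ff (k m : ℕ) :
    ∑ j ∈ Finset.range (k+1), (k.choose j : ℝ) * fallingFactorial (j:ℝ) m
      = 2^(k - m) * fallingFactorial (k:ℝ) m := by
  rw [ff_nat]
  have := nat_sum_choose_desc k m
  calc ∑ j ∈ Finset.range (k+1), (k.choose j : ℝ) * fallingFactorial (j:ℝ) m
      = ∑ j ∈ Finset.range (k+1), ((k.choose j * j.descFactorial m : ℕ) : ℝ) := by
        apply Finset.sum_congr rfl
        intro j _
        rw [ff_nat]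
        push_cast
        ring
    _ = ((2^(k-m) * k.descFactorial m : ℕ) : ℝ) := by rw [← Nat.cast_sum, this]
    _ = 2^(k-m) * (k.descFactorial m : ℝ) := by push_cast; ring

lemma df_cast (a b : ℕ) (h : b ≤ a) :
    (a.descFactorial b : ℝ) = (a.factorial : ℝ) / ((a-b).factorial : ℝ) := by
  rw [eq_div_iff (by exact_mod_cast (a-b).factorial_ne_zero)]
  exact_mod_cast Nat.mul_comm (a-b).factorial (a.descFactorial b) ▸
    congrArg (Nat.cast (R := ℝ)) (Nat.factorial_mul_descFactorial h)

lemma ratio_df (n t α i A : ℕ) (hi : i ≤ t) (hiA : i ≤ A) (hA : A + t ≤ n) :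
    ((n-t).choose (A-i) : ℝ) / (n.choose A : ℝ)
      = ((A.descFactorial i : ℝ) * ((n-A).descFactorial (t-i) : ℝ)) / (n.descFactorial t : ℝ) := by
  have e1 : n - t - (A - i) = n - A - (t - i) := by omega
  rw [Nat.cast_choose ℝ (by omega : A - i ≤ n - t), Nat.cast_choose ℝ (by omega : A ≤ n),
    df_cast A i hiA, df_cast (n-A) (t-i) (by omega), df_cast n t (by omega), e1]
  have f1 : ((n-t).factorial : ℝ) ≠ 0 := by exact_mod_cast (n-t).factorial_ne_zero
  have f2 : ((A-i).factorial : ℝ) ≠ 0 := by exact_mod_cast (A-i).factorial_ne_zero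
  have f3 : ((n-A-(t-i)).factorial : ℝ) ≠ 0 := by exact_mod_cast (n-A-(t-i)).factorial_ne_zero
  have f4 : (n.factorial : ℝ) ≠ 0 := by exact_mod_cast n.factorial_ne_zero
  have f5 : (A.factorial : ℝ) ≠ 0 := by exact_mod_cast A.factorial_ne_zero
  have f6 : ((n-A).factorial : ℝ) ≠ 0 := by exact_mod_cast (n-A).factorial_ne_zero
  field_simp

lemma two_pow_helper (k m : ℕ) :
    ((2:ℝ)^k)⁻¹ * (2^(k-m) * fallingFactorial (k:ℝ) m)
      = ((2:ℝ)^m)⁻¹ * fallingFactorial (k:ℝ) m := by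
  rcases le_or_gt m k with h | h
  · have h2 : ((2:ℝ)^(k-m)) * 2^m = 2^k := by
      rw [← pow_add]
      congr 1
      omega
    have hkm : ((2:ℝ)^(k-m)) ≠ 0 := by positivity
    have hm : ((2:ℝ)^m) ≠ 0 := by positivity
    rw [← h2, mul_inv]
    field_simp
  · rw [ff_nat, Nat.descFactorial_eq_zero_iff_lt.2 h]
    simp

end FF

open FF Finset in
/-- `β_i = 2^{-k} ∑_{j=0}^k C(k,j) C(n-t, j+α-i)/C(n, j+α)` equals
`(1/n^{falling t}) ∑_{x,y} 2^{-(x+y)} (-1)^y k^{falling (x+y)} C(i,x) C(t-i,y)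
 α^{falling (i-x)} (n-α-x-y)^{falling (t-i-y)}`,
summing over `0 ≤ x ≤ i` and `0 ≤ y ≤ t-i`. -/
theorem beta_falling_factorial_expansion (n t k α i : ℕ)
    (hi : i ≤ t) (htα : t ≤ α) (hn : α + k + t ≤ n) :
    ((2 : ℝ) ^ k)⁻¹ * ∑ j ∈ Finset.range (k + 1),
        (k.choose j : ℝ) * ((n - t).choose (j + α - i) : ℝ) / (n.choose (j + α) : ℝ) =
      (fallingFactorial (n : ℝ) t)⁻¹ *
        ∑ x ∈ Finset.range (i + 1), ∑ y ∈ Finset.range (t - i + 1),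
          ((2 : ℝ) ^ (x + y))⁻¹ * (-1 : ℝ) ^ y * fallingFactorial (k : ℝ) (x + y) *
            (i.choose x : ℝ) * ((t - i).choose y : ℝ) *
            fallingFactorial (α : ℝ) (i - x) *
            fallingFactorial ((n : ℝ) - α - x - y) (t - i - y) := by
  have step1 : ∀ j ∈ range (k+1),
      (k.choose j : ℝ) * ((n - t).choose (j + α - i) : ℝ) / (n.choose (j + α) : ℝ)
        = (fallingFactorial (n:ℝ) t)⁻¹ * ((k.choose j : ℝ) *
            (fallingFactorial ((j:ℝ)+α) i * fallingFactorial ((n:ℝ)-α-j) (t-i))) := by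
    intro j hj
    rw [mem_range] at hj
    have hr := ratio_df n t α i (j+α) hi (by omega) (by omega)
    have c1 : ((j:ℝ)+α) = (((j+α : ℕ)) : ℝ) := by push_cast; ring
    have c2 : ((n:ℝ)-α-j) = (((n-α-j : ℕ)) : ℝ) := by
      rw [Nat.cast_sub (by omega : j ≤ n - α), Nat.cast_sub (by omega : α ≤ n)]
    have c3 : n - α - j = n - (j+α) := by omega
    rw [mul_div_assoc, c1, c2, ff_nat, ff_nat, ff_nat, c3, hr]
    ring
  rw [Finset.sum_congr rfl step1, ← Finset.mul_sum]
  have step2 : ∀ j ∈ range (k+1),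
      (k.choose j : ℝ) * (fallingFactorial ((j:ℝ)+α) i * fallingFactorial ((n:ℝ)-α-j) (t-i))
        = ∑ x ∈ range (i+1), ∑ y ∈ range (t-i+1),
            ((i.choose x : ℝ) * ((t-i).choose y : ℝ) * (-1:ℝ)^y * fallingFactorial (α:ℝ) (i-x)
              * fallingFactorial ((n:ℝ)-α-x-y) (t-i-y))
            * ((k.choose j : ℝ) * fallingFactorial (j:ℝ) (x+y)) := by
    intro j hj
    rw [ff_vander (j:ℝ) (α:ℝ) i, Finset.sum_mul, Finset.mul_sum]
    apply Finset.sum_congr rfl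
    intro x hx
    have harg : (n:ℝ)-α-j = ((n:ℝ)-α-x) - ((j:ℝ)-x) := by ring
    rw [harg, ff_sub_expand ((j:ℝ)-x) ((n:ℝ)-α-x) (t-i), Finset.mul_sum, Finset.mul_sum]
    apply Finset.sum_congr rfl
    intro y hy
    have hsplit : fallingFactorial (j:ℝ) (x+y)
        = fallingFactorial (j:ℝ) x * fallingFactorial ((j:ℝ)-x) y := ff_add (j:ℝ) x y
    rw [hsplit]
    ring
  rw [Finset.sum_congr rfl step2]
  rw [Finset.sum_comm]
  have step3 : ∀ x ∈ range (i+1),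
      (∑ j ∈ range (k+1), ∑ y ∈ range (t-i+1),
          ((i.choose x : ℝ) * ((t-i).choose y : ℝ) * (-1:ℝ)^y * fallingFactorial (α:ℝ) (i-x)
            * fallingFactorial ((n:ℝ)-α-x-y) (t-i-y))
          * ((k.choose j : ℝ) * fallingFactorial (j:ℝ) (x+y)))
        = ∑ y ∈ range (t-i+1),
            ((i.choose x : ℝ) * ((t-i).choose y : ℝ) * (-1:ℝ)^y * fallingFactorial (α:ℝ) (i-x)
              * fallingFactorial ((n:ℝ)-α-x-y) (t-i-y))
            * (2^(k-(x+y)) * fallingFactorial (k:ℝ) (x+y)) := by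
    intro x hx
    rw [Finset.sum_comm]
    apply Finset.sum_congr rfl
    intro y hy
    rw [← Finset.mul_sum, ← sum_choose_ff k (x+y), Finset.mul_sum]
  rw [Finset.sum_congr rfl step3]
  rw [← mul_assoc, mul_comm ((2:ℝ)^k)⁻¹ (fallingFactorial (n:ℝ) t)⁻¹, mul_assoc]
  congr 1
  rw [Finset.mul_sum]
  apply Finset.sum_congr rfl
  intro x hx
  rw [Finset.mul_sum]
  apply Finset.sum_congr rfl
  intro y hy
  have h2p := two_pow_helper k (x+y)
  calc ((2:ℝ)^k)⁻¹ * (((i.choose x : ℝ) * ((t-i).choose y : ℝ) * (-1:ℝ)^y * fallingFactorial (α:ℝ) (i-x)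
          * fallingFactorial ((n:ℝ)-α-x-y) (t-i-y))
        * (2^(k-(x+y)) * fallingFactorial (k:ℝ) (x+y)))
      = ((i.choose x : ℝ) * ((t-i).choose y : ℝ) * (-1:ℝ)^y * fallingFactorial (α:ℝ) (i-x)
          * fallingFactorial ((n:ℝ)-α-x-y) (t-i-y))
        * (((2:ℝ)^k)⁻¹ * (2^(k-(x+y)) * fallingFactorial (k:ℝ) (x+y))) := by ring
    _ = ((i.choose x : ℝ) * ((t-i).choose y : ℝ) * (-1:ℝ)^y * fallingFactorial (α:ℝ) (i-x)
          * fallingFactorial ((n:ℝ)-α-x-y) (t-i-y))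
        * (((2:ℝ)^(x+y))⁻¹ * fallingFactorial (k:ℝ) (x+y)) := by rw [h2p]
    _ = ((2 : ℝ) ^ (x + y))⁻¹ * (-1 : ℝ) ^ y * fallingFactorial (k : ℝ) (x + y) *
            (i.choose x : ℝ) * ((t - i).choose y : ℝ) *
            fallingFactorial (α : ℝ) (i - x) *
            fallingFactorial ((n : ℝ) - α - x - y) (t - i - y) := by ring
end
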